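/- arXiv:2605.13449 — 4 statements merged into one kernel-verified Lean document; each statement's English description precedes it below -/
import Mathlib

section
/- Let n ≥ 2 and let K ⊂ ℝⁿ be a convex body with r·Bⁿ ⊆ K for some r > 0. Then K ⊆ R₀·Bⁿ, where R₀ = 2^{n−1}·κ_{n−2}^{−1}·r^{−(n−2)}·H^{n−1}(∂K). (Lemma 2.1(ii).) -/
open MeasureTheory Set Pointwise
open scoped RealInnerProductSpace ENNReal NNReal

noncomputable section

/-- The support function `h(K,u) = sup_{x ∈ K} ⟨u,x⟩` of a set `K ⊆ ℝⁿ`. -/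
def suppFn {n : ℕ} (K : Set (EuclideanSpace ℝ (Fin n))) (u : EuclideanSpace ℝ (Fin n)) : ℝ :=
  sSup ((fun x => ⟪u, x⟫) '' K)

/-- The line `g_{x,u} = {x + t u : t ∈ ℝ}` through `x` with direction `u`. -/
def lineThrough {n : ℕ} (x u : EuclideanSpace ℝ (Fin n)) : Set (EuclideanSpace ℝ (Fin n)) :=
  {y | ∃ t : ℝ, y = x + t • u}

/-- The orthogonal projection `A|u^⊥` of a set `A` onto the hyperplane through the
origin orthogonal to the unit vector `u`. -/
def projPerp {n : ℕ} (u : EuclideanSpace ℝ (Fin n)) (A : Set (EuclideanSpace ℝ (Fin n))) :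
    Set (EuclideanSpace ℝ (Fin n)) :=
  (fun x => x - ⟪x, u⟫ • u) '' A

/-- `B ⊆ ℝⁿ` is `(n-1)`-dimensional rectifiable: it is `H^{n-1}`-measurable, has finite
`H^{n-1}` measure, and `H^{n-1}`-almost all of it is covered by countably many Lipschitz
images of `ℝ^{n-1}`. -/
def IsRectifiableCodim1 (n : ℕ) (B : Set (EuclideanSpace ℝ (Fin n))) : Prop :=
  NullMeasurableSet B μH[(n : ℝ) - 1] ∧ μH[(n : ℝ) - 1] B < ⊤ ∧
    ∃ f : ℕ → EuclideanSpace ℝ (Fin (n - 1)) → EuclideanSpace ℝ (Fin n),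
      (∀ i, ∃ C : ℝ≥0, LipschitzWith C (f i)) ∧
        μH[(n : ℝ) - 1] (B \ ⋃ i, Set.range (f i)) = 0

/-- `ω_n = H^{n-1}(S^{n-1})`, the surface area of the unit sphere in `ℝⁿ`. -/
def sphereArea (n : ℕ) : ℝ :=
  (μH[(n : ℝ) - 1] (Metric.sphere (0 : EuclideanSpace ℝ (Fin n)) 1)).toReal

/-- `κ_m`, the Lebesgue volume of the unit ball in `ℝ^m`. -/
def unitBallVol (m : ℕ) : ℝ :=
  (volume (Metric.closedBall (0 : EuclideanSpace ℝ (Fin m)) 1)).toReal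

/-- The mean width `w(K) = (1/ω_n) ∫_{S^{n-1}} (h(K,u) + h(K,-u)) dH^{n-1}(u)`. -/
def meanWidth {n : ℕ} (K : Set (EuclideanSpace ℝ (Fin n))) : ℝ :=
  (sphereArea n)⁻¹ *
    ∫ u in Metric.sphere (0 : EuclideanSpace ℝ (Fin n)) 1,
      (suppFn K u + suppFn K (-u)) ∂μH[(n : ℝ) - 1]

section Helpers

variable {F : Type*} [NormedAddCommGroup F] [InnerProductSpace ℝ F] [CompleteSpace F]

/-- Metric projection onto a nonempty closed convex set, with its basic properties. -/
theorem exists_metric_proj {K : Set F} (hne : K.Nonempty) (hcl : IsClosed K)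
    (hconv : Convex ℝ K) :
    ∃ p : F → F, (∀ x, p x ∈ K) ∧ (∀ x, ∀ w ∈ K, ⟪x - p x, w - p x⟫ ≤ 0) ∧
      LipschitzWith 1 p ∧ ∀ z ∈ K, p z = z := by
  have hcompl : IsComplete K := hcl.isComplete
  choose p hpK hp using fun u => exists_norm_eq_iInf_of_complete_convex hne hcompl hconv u
  have hvar : ∀ x, ∀ w ∈ K, ⟪x - p x, w - p x⟫ ≤ 0 := fun x =>
    (norm_eq_iInf_iff_real_inner_le_zero hconv (hpK x)).1 (hp x)
  have hlip : LipschitzWith 1 p := by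
    apply LipschitzWith.of_dist_le_mul
    intro x y
    simp only [NNReal.coe_one, one_mul, dist_eq_norm]
    have h1 := hvar x (p y) (hpK y)
    have h2 := hvar y (p x) (hpK x)
    have key : ‖p x - p y‖ ^ 2 ≤ ⟪x - y, p x - p y⟫ := by
      have e : x - y = (x - p x) - (y - p y) + (p x - p y) := by abel
      rw [e, inner_add_left, inner_sub_left, real_inner_self_eq_norm_sq]
      have h1' : (0:ℝ) ≤ ⟪x - p x, p x - p y⟫ := by
        have h1'' : ⟪x - p x, -(p x - p y)⟫ ≤ 0 := by rwa [neg_sub]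
        rwa [inner_neg_right, neg_nonpos] at h1''
      linarith
    rcases le_or_gt ‖p x - p y‖ 0 with h | h
    · linarith [norm_nonneg (x - y)]
    · nlinarith [real_inner_le_norm (x - y) (p x - p y)]
  refine ⟨p, hpK, hvar, hlip, fun z hz => ?_⟩
  have h0 : ‖z - p z‖ = 0 := by
    refine le_antisymm ?_ (norm_nonneg _)
    rw [hp z]
    haveI : Nonempty K := hne.to_subtype
    have : (⨅ w : K, ‖z - (w : F)‖) ≤ ‖z - (⟨z, hz⟩ : K)‖ :=
      ciInf_le ⟨0, Set.forall_mem_range.2 fun _ => norm_nonneg _⟩ _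
    simpa using this
  exact (sub_eq_zero.1 (norm_eq_zero.1 h0)).symm


/-- A single coordinate is bounded by the Euclidean norm. -/
lemma abs_coord_le_norm {k : ℕ} (y : EuclideanSpace ℝ (Fin k)) (i : Fin k) :
    |y i| ≤ ‖y‖ := by
  rw [EuclideanSpace.norm_eq, ← Real.sqrt_sq_eq_abs]
  apply Real.sqrt_le_sqrt
  have : |y i| ^ 2 ≤ ∑ j, ‖y j‖ ^ 2 := by
    have := Finset.single_le_sum (f := fun j => ‖y j‖ ^ 2)
      (fun j _ => by positivity) (Finset.mem_univ i)
    simpa [Real.norm_eq_abs, sq_abs] using this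
  simpa [sq_abs] using this

/-- Dropping coordinates (viewing the result in the sup-norm product space) is 1-Lipschitz. -/
lemma lipschitz_restrict {k l : ℕ} (e : Fin k → Fin l) :
    LipschitzWith 1 (fun (y : EuclideanSpace ℝ (Fin l)) => (fun j => y (e j) : Fin k → ℝ)) := by
  apply LipschitzWith.of_dist_le_mul
  intro y z
  rw [NNReal.coe_one, one_mul]
  apply (dist_pi_le_iff dist_nonneg).2
  intro j
  rw [Real.dist_eq, dist_eq_norm]
  exact abs_coord_le_norm (y - z) (e j)

/-- Inserting a coordinate (from the sup-norm product space) is Lipschitz. -/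
lemma lipschitz_insertNth {k : ℕ} (i : Fin (k+1)) (a : ℝ) :
    LipschitzWith (k+1 : ℝ≥0) (fun (w : Fin k → ℝ) =>
      ((WithLp.equiv 2 (Fin (k+1) → ℝ)).symm (Fin.insertNth i a w))) := by
  apply LipschitzWith.of_dist_le_mul
  intro w w'
  rw [EuclideanSpace.dist_eq]
  push_cast
  have hcoord : ∀ j : Fin (k+1), dist ((Fin.insertNth i a w : Fin (k+1) → ℝ) j) ((Fin.insertNth i a w' : Fin (k+1) → ℝ) j)
      ≤ dist w w' := by
    intro j
    rcases eq_or_ne j i with h | h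
    · subst h; simpa using dist_nonneg
    · obtain ⟨l, rfl⟩ := Fin.exists_succAbove_eq h
      rw [Fin.insertNth_apply_succAbove, Fin.insertNth_apply_succAbove]
      exact dist_le_pi_dist w w' l
  have h1 : ∑ j : Fin (k+1), dist ((Fin.insertNth i a w : Fin (k+1) → ℝ) j) ((Fin.insertNth i a w' : Fin (k+1) → ℝ) j) ^ 2
      ≤ (k+1) * dist w w' ^ 2 := by
    calc ∑ j : Fin (k+1), dist ((Fin.insertNth i a w : Fin (k+1) → ℝ) j) ((Fin.insertNth i a w' : Fin (k+1) → ℝ) j) ^ 2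
        ≤ ∑ _j : Fin (k+1), dist w w' ^ 2 := by
          apply Finset.sum_le_sum
          intro j _
          exact pow_le_pow_left₀ dist_nonneg (hcoord j) 2
      _ = (k+1) * dist w w' ^ 2 := by rw [Finset.sum_const, Finset.card_univ, Fintype.card_fin, nsmul_eq_mul]; push_cast; ring
  calc Real.sqrt (∑ j, dist ((WithLp.equiv 2 (Fin (k+1) → ℝ)).symm (Fin.insertNth i a w) j)
        (((WithLp.equiv 2 (Fin (k+1) → ℝ)).symm (Fin.insertNth i a w')) j) ^ 2)
      = Real.sqrt (∑ j, dist ((Fin.insertNth i a w : Fin (k+1) → ℝ) j) ((Fin.insertNth i a w' : Fin (k+1) → ℝ) j) ^ 2) := rfl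
    _ ≤ Real.sqrt ((k+1) * dist w w' ^ 2) := Real.sqrt_le_sqrt h1
    _ = Real.sqrt (k+1) * dist w w' := by
        rw [Real.sqrt_mul (by positivity), Real.sqrt_sq dist_nonneg]
    _ ≤ (k+1) * dist w w' := by
        have h2 : Real.sqrt ((k:ℝ)+1) ≤ (k:ℝ)+1 := by
          have h3 := Real.sqrt_le_sqrt (show ((k:ℝ)+1) ≤ ((k:ℝ)+1)^2 by
            nlinarith [sq_nonneg (k:ℝ), Nat.cast_nonneg (α := ℝ) k])
          rwa [Real.sqrt_sq (by positivity)] at h3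
        exact mul_le_mul_of_nonneg_right h2 dist_nonneg

/-- uniqueness-style lemma for the metric projection -/
lemma proj_eq_of_var {K : Set F} {p : F → F} (hpK : ∀ x, p x ∈ K)
    (hpvar : ∀ x, ∀ w ∈ K, ⟪x - p x, w - p x⟫ ≤ 0)
    {w v : F} (hv : v ∈ K) (hvar : ∀ y ∈ K, ⟪w - v, y - v⟫ ≤ 0) : p w = v := by
  have hA := hpvar w v hv
  have hB := hvar (p w) (hpK w)
  have e : v - p w = (w - p w) - (w - v) := by abel
  have e2 : ‖v - p w‖^2 = ⟪w - p w, v - p w⟫ - ⟪w - v, v - p w⟫ := by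
    rw [← inner_sub_left, ← e, real_inner_self_eq_norm_sq]
  have e3 : ⟪w - v, v - p w⟫ = -⟪w - v, p w - v⟫ := by
    rw [← inner_neg_right, neg_sub]
  have hsq : ‖v - p w‖^2 ≤ 0 := by rw [e2, e3]; linarith
  have h6 : ‖v - p w‖ = 0 := by nlinarith [norm_nonneg (v - p w)]
  exact (sub_eq_zero.1 (norm_eq_zero.1 h6)).symm

theorem frontier_measure_lt_top {m : ℕ} {K : Set (EuclideanSpace ℝ (Fin (m+2)))}
    (hne : K.Nonempty) (hK : IsCompact K) (hKconv : Convex ℝ K) :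
    μH[((m+1:ℕ):ℝ)] (frontier K) < ⊤ := by
  set d : ℝ := ((m+1:ℕ):ℝ) with hd_def
  have hd : 0 ≤ d := by positivity
  obtain ⟨p, hpK, hpvar, hplip, hpfix⟩ := exists_metric_proj hne hK.isClosed hKconv
  obtain ⟨M, hM0, hMK⟩ : ∃ M, 0 < M ∧ K ⊆ Metric.closedBall 0 M := by
    obtain ⟨M, hM⟩ := hK.isBounded.subset_closedBall 0
    exact ⟨max M 1, lt_of_lt_of_le one_pos (le_max_right M 1),
      hM.trans (Metric.closedBall_subset_closedBall (le_max_left M 1))⟩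
  set c := 2 * M with hc
  have hcM : M < c := by linarith
  have hc0 : 0 < c := by linarith
  set cube : Set (Fin (m+1) → ℝ) := Set.pi univ (fun _ => Icc (-c) c) with hcube
  have hcubeC : IsCompact cube := isCompact_univ_pi fun _ => isCompact_Icc
  set φ : Fin (m+2) → ℝ → (Fin (m+1) → ℝ) → EuclideanSpace ℝ (Fin (m+2)) :=
    fun i a w => (WithLp.equiv 2 (Fin (m+2) → ℝ)).symm (Fin.insertNth i a w) with hφ
  have hφlip : ∀ i a, LipschitzWith (((m+1 : ℕ) : ℝ≥0) + 1) (φ i a) := fun i a =>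
    lipschitz_insertNth i a
  set U : Set (EuclideanSpace ℝ (Fin (m+2))) :=
    ⋃ i : Fin (m+2), (φ i c '' cube ∪ φ i (-c) '' cube) with hU
  have hUcomp : IsCompact U := isCompact_iUnion fun i =>
    (hcubeC.image (hφlip i c).continuous).union (hcubeC.image (hφlip i (-c)).continuous)
  have hfront : frontier K ⊆ p '' U := by
    intro z hz
    have hzK : z ∈ K := hK.isClosed.frontier_subset hz
    have hcl : z ∈ closure (p '' U) := by
      rw [Metric.mem_closure_iff]
      intro ε hε
      have hz2 : z ∈ closure Kᶜ := by
        rw [frontier_eq_closure_inter_closure] at hz; exact hz.2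
      obtain ⟨x, hxc, hxd⟩ := Metric.mem_closure_iff.1 hz2 ε hε
      obtain ⟨w, hwU, hwp⟩ : ∃ w ∈ U, p w = p x := by
        have hpx : p x ∈ K := hpK x
        have hd0 : x - p x ≠ 0 := sub_ne_zero.2 (fun h => hxc (h ▸ hpx))
        obtain ⟨j₀, hj₀⟩ : ∃ j₀, (x - p x) j₀ ≠ 0 := by
          by_contra h; push_neg at h; exact hd0 (PiLp.ext fun j => h j)
        set dv : EuclideanSpace ℝ (Fin (m+2)) := x - p x with hdv
        set q : ℝ → EuclideanSpace ℝ (Fin (m+2)) := fun t => p x + t • dv with hq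
        set g : ℝ → ℝ := fun t => ‖(fun j => q t j : Fin (m+2) → ℝ)‖ with hg
        have hgcont : Continuous g := by
          apply Continuous.norm
          apply continuous_pi
          intro j
          have e : (fun t => q t j) = fun t => p x j + t * dv j := rfl
          rw [e]; fun_prop
        have hMnorm : ∀ y ∈ K, ∀ j, |y j| ≤ M := by
          intro y hy j
          refine (abs_coord_le_norm y j).trans ?_
          have := hMK hy
          rwa [Metric.mem_closedBall, dist_zero_right] at this
        have hg0 : g 0 ≤ M := by
          apply (pi_norm_le_iff_of_nonneg hM0.le).2
          intro j
          rw [Real.norm_eq_abs]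
          have : q 0 j = p x j := by simp [hq]
          rw [this]; exact hMnorm (p x) hpx j
        set T : ℝ := (c + M)/|dv j₀| with hT
        have hT0 : 0 ≤ T := by positivity
        have hTc : c ≤ g T := by
          have h1 : |q T j₀| ≤ g T := by
            have := norm_le_pi_norm (fun j => q T j : Fin (m+2) → ℝ) j₀
            simpa [Real.norm_eq_abs] using this
          have hB : |T * dv j₀| = c + M := by
            rw [abs_mul, abs_of_nonneg hT0, hT, div_mul_cancel₀ _ (abs_ne_zero.2 hj₀)]
          have hq' : q T j₀ = p x j₀ + T * dv j₀ := rfl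
          have h5 : |T * dv j₀| ≤ |q T j₀| + |p x j₀| := by
            rw [hq']
            have := abs_add_le (p x j₀ + T * dv j₀) (-(p x j₀))
            simpa using this
          have h7 := hMnorm (p x) hpx j₀
          have h8 : |p x j₀| ≤ M := h7
          rw [hB] at h5
          linarith
        have hivt : c ∈ g '' Icc 0 T := by
          apply intermediate_value_Icc hT0 hgcont.continuousOn
          exact ⟨by linarith, hTc⟩
        obtain ⟨t, ht, hgt⟩ := hivt
        set w := q t with hw
        have hvarw : ∀ y ∈ K, ⟪w - p x, y - p x⟫ ≤ 0 := by
          intro y hy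
          have e : w - p x = t • dv := by simp [hw, hq]
          rw [e, real_inner_smul_left]
          exact mul_nonpos_of_nonneg_of_nonpos ht.1 (hpvar x y hy)
        have hpw : p w = p x := proj_eq_of_var hpK hpvar hpx hvarw
        have hwnorm : ‖(fun j => w j : Fin (m+2) → ℝ)‖ = c := hgt
        have hall : ∀ j, |w j| ≤ c := by
          intro j
          have := norm_le_pi_norm (fun j => w j : Fin (m+2) → ℝ) j
          rw [hwnorm] at this; simpa [Real.norm_eq_abs] using this
        obtain ⟨j₁, hj₁⟩ : ∃ j₁, |w j₁| = c := by
          obtain ⟨j₁, _, hmax⟩ := Finset.exists_max_image Finset.univ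
            (fun j => |w j|) ⟨j₀, Finset.mem_univ _⟩
          refine ⟨j₁, le_antisymm (hall j₁) ?_⟩
          have h9 : ‖(fun j => w j : Fin (m+2) → ℝ)‖ ≤ |w j₁| := by
            apply (pi_norm_le_iff_of_nonneg (abs_nonneg _)).2
            intro j; rw [Real.norm_eq_abs]; exact hmax j (Finset.mem_univ _)
          rw [hwnorm] at h9; exact h9
        have hrem : (Fin.removeNth j₁ (fun j => w j)) ∈ cube := by
          intro j _
          simp only [Fin.removeNth]
          exact abs_le.1 (hall _)
        have hins : ∀ a, w j₁ = a → φ j₁ a (Fin.removeNth j₁ (fun j => w j)) = w := by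
          intro a ha
          rw [← ha]
          show (WithLp.equiv 2 (Fin (m+2) → ℝ)).symm
            (Fin.insertNth j₁ (w j₁) (Fin.removeNth j₁ (fun j => w j))) = w
          rw [Fin.insertNth_self_removeNth]
          rfl
        rcases (abs_eq hc0.le).1 hj₁ with h | h
        · exact ⟨w, mem_iUnion.2 ⟨j₁, Or.inl ⟨_, hrem, hins c h⟩⟩, hpw⟩
        · exact ⟨w, mem_iUnion.2 ⟨j₁, Or.inr ⟨_, hrem, hins (-c) h⟩⟩, hpw⟩
      refine ⟨p w, Set.mem_image_of_mem p hwU, ?_⟩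
      rw [hwp, ← hpfix z hzK]
      calc dist (p z) (p x) ≤ 1 * dist z x := hplip.dist_le_mul z x
        _ < ε := by rwa [one_mul]
    rwa [IsClosed.closure_eq (hUcomp.image hplip.continuous).isClosed] at hcl
  have hπ : (μH[d] : Measure (Fin (m+1) → ℝ)) = volume := by
    rw [hd_def, show ((m+1:ℕ):ℝ) = ((Fintype.card (Fin (m+1)):ℕ):ℝ) by simp]
    exact hausdorffMeasure_pi_real
  have himg : ∀ i a, μH[d] (φ i a '' cube) < ⊤ := by
    intro i a
    calc μH[d] (φ i a '' cube) ≤ ((((m+1 : ℕ) : ℝ≥0) + 1) : ℝ≥0∞) ^ d * μH[d] cube :=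
        (hφlip i a).hausdorffMeasure_image_le hd cube
      _ = ((((m+1 : ℕ) : ℝ≥0) + 1) : ℝ≥0∞) ^ d * volume cube := by rw [hπ]
      _ < ⊤ := by
          apply ENNReal.mul_lt_top
          · exact ENNReal.rpow_lt_top_of_nonneg hd (by simp)
          · rw [hcube, volume_pi_pi]
            exact ENNReal.prod_lt_top (fun i _ => by simp [Real.volume_Icc])
  calc μH[d] (frontier K) ≤ μH[d] (p '' U) := measure_mono hfront
    _ ≤ ((1:ℝ≥0) : ℝ≥0∞) ^ d * μH[d] U := hplip.hausdorffMeasure_image_le hd U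
    _ = μH[d] U := by simp
    _ ≤ ∑ i : Fin (m+2), μH[d] (φ i c '' cube ∪ φ i (-c) '' cube) :=
        measure_iUnion_fintype_le _ _
    _ ≤ ∑ i : Fin (m+2), (μH[d] (φ i c '' cube) + μH[d] (φ i (-c) '' cube)) :=
        Finset.sum_le_sum fun i _ => measure_union_le _ _
    _ < ⊤ := ENNReal.sum_lt_top.2 fun i _ =>
        ENNReal.add_lt_top.2 ⟨himg i c, himg i (-c)⟩

end Helpers

theorem key_lower {m : ℕ} {K : Set (EuclideanSpace ℝ (Fin (m+2)))}
    (hKcl : IsClosed K) (hKb : Bornology.IsBounded K) (hKconv : Convex ℝ K)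
    {r R : ℝ} (hr : 0 < r) (hR : 0 < R)
    (hball : Metric.closedBall 0 r ⊆ K)
    (hx : (R • EuclideanSpace.single (0 : Fin (m+2)) (1:ℝ)) ∈ K) :
    ENNReal.ofReal (R/2) * (ENNReal.ofReal ((r/2)^m) *
        volume (Metric.closedBall (0 : EuclideanSpace ℝ (Fin m)) 1))
      ≤ μH[((m+1:ℕ):ℝ)] (frontier K) := by
  set d : ℝ := ((m+1:ℕ):ℝ) with hd_def
  have hd : 0 ≤ d := by positivity
  set Q : EuclideanSpace ℝ (Fin (m+2)) → (Fin (m+1) → ℝ) :=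
    fun y => (fun j => y (Fin.castSucc j)) with hQdef
  have hQ : LipschitzWith 1 Q := lipschitz_restrict Fin.castSucc
  set D : Set (Fin (m+1) → ℝ) :=
    {w | w 0 ∈ Icc (0:ℝ) (R/2) ∧ ∑ j : Fin m, (w j.succ)^2 ≤ (r/2)^2} with hDdef
  -- Step 1 : D ⊆ Q '' frontier K
  have hstep1 : D ⊆ Q '' frontier K := by
    rintro w ⟨hw0, hwsum⟩
    set wh : EuclideanSpace ℝ (Fin (m+2)) :=
      (WithLp.equiv 2 (Fin (m+2) → ℝ)).symm (Fin.snoc w 0) with hwh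
    have hwh_cast : ∀ j : Fin (m+1), wh (Fin.castSucc j) = w j := fun j => by
      rw [hwh]; exact Fin.snoc_castSucc (α := fun _ => ℝ) 0 w j
    have hwh_last : wh (Fin.last (m+1)) = 0 := by rw [hwh]; exact Fin.snoc_last (α := fun _ => ℝ) 0 w
    set t := w 0 / R with ht
    have ht0 : 0 ≤ t := div_nonneg hw0.1 hR.le
    have ht2 : t ≤ 1/2 := by rw [ht, div_le_iff₀ hR]; linarith [hw0.2]
    have h1t0 : (0:ℝ) < 1 - t := by linarith
    set x0 : EuclideanSpace ℝ (Fin (m+2)) := R • EuclideanSpace.single 0 1 with hx0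
    have hx00 : x0 (0 : Fin (m+2)) = R := by simp [hx0]
    have hx0ne : ∀ i : Fin (m+2), i ≠ 0 → x0 i = 0 := by
      intro i hi; simp [hx0, EuclideanSpace.single_apply, hi]
    set v : EuclideanSpace ℝ (Fin (m+2)) := wh - t • x0 with hv
    have hv_coord : ∀ i, v i = wh i - t * x0 i := fun i => rfl
    have hnormv : ‖v‖ ≤ r/2 := by
      rw [EuclideanSpace.norm_eq]
      have hsum : ∑ i, ‖v i‖^2 = ∑ j : Fin m, (w j.succ)^2 := by
        rw [Fin.sum_univ_castSucc (n := m+1)]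
        have hlast : ‖v (Fin.last (m+1))‖^2 = 0 := by
          rw [hv_coord, hwh_last, hx0ne _ (by simp [Fin.ext_iff]), ]
          simp
        rw [hlast, add_zero, Fin.sum_univ_succ (n := m)]
        have h00 : ‖v (Fin.castSucc 0)‖^2 = 0 := by
          rw [hv_coord]
          have : (Fin.castSucc (0 : Fin (m+1))) = (0 : Fin (m+2)) := by simp
          rw [this, hx00]
          have : wh (0 : Fin (m+2)) = w 0 := by
            have := hwh_cast 0
            simpa using this
          rw [this, ht, div_mul_cancel₀ _ hR.ne']
          simp
        rw [h00, zero_add]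
        apply Finset.sum_congr rfl
        intro j _
        rw [hv_coord, hx0ne _ (by simp [Fin.ext_iff]), hwh_cast]
        simp [sq_abs]
      rw [hsum]
      calc Real.sqrt (∑ j : Fin m, (w j.succ)^2) ≤ Real.sqrt ((r/2)^2) :=
            Real.sqrt_le_sqrt hwsum
        _ = r/2 := Real.sqrt_sq (by positivity)
    have hwhK : wh ∈ K := by
      have hbmem : (1-t)⁻¹ • v ∈ Metric.closedBall (0 : EuclideanSpace ℝ (Fin (m+2))) r := by
        rw [Metric.mem_closedBall, dist_zero_right, norm_smul, Real.norm_eq_abs,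
          abs_of_pos (by positivity)]
        calc (1-t)⁻¹ * ‖v‖ ≤ 2 * (r/2) := by
              apply mul_le_mul _ hnormv (norm_nonneg _) (by norm_num)
              rw [show (2:ℝ) = (1/2 : ℝ)⁻¹ by norm_num]
              exact inv_anti₀ (by norm_num) (by linarith)
          _ = r := by ring
      have hcomb := hKconv hx (hball hbmem) ht0 (by linarith : (0:ℝ) ≤ 1 - t) (by ring)
      have : t • x0 + (1-t) • ((1-t)⁻¹ • v) = wh := by
        rw [smul_inv_smul₀ h1t0.ne', hv]
        abel
      rwa [this] at hcomb
    set el : EuclideanSpace ℝ (Fin (m+2)) :=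
      EuclideanSpace.single (Fin.last (m+1)) 1 with hel
    have hel_cast : ∀ j : Fin (m+1), el (Fin.castSucc j) = 0 := by
      intro j
      simp [hel, EuclideanSpace.single_apply, Fin.ext_iff]
      omega
    have hel_last : el (Fin.last (m+1)) = 1 := by simp [hel]
    set Tset : Set ℝ := {s | wh + s • el ∈ K} with hTset
    have h0T : (0:ℝ) ∈ Tset := by simpa [hTset] using hwhK
    have hTclosed : IsClosed Tset := by
      apply IsClosed.preimage _ hKcl
      exact continuous_const.add (continuous_id.smul continuous_const)
    have hTbdd : BddAbove Tset := by
      obtain ⟨M, hM⟩ := hKb.subset_closedBall 0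
      refine ⟨M, fun s hs => ?_⟩
      have hcoord : (wh + s • el) (Fin.last (m+1)) = s := by
        have : (wh + s • el) (Fin.last (m+1)) = wh (Fin.last (m+1)) + s * el (Fin.last (m+1)) := rfl
        rw [this, hwh_last, hel_last]; ring
      have h1 := abs_coord_le_norm (wh + s • el) (Fin.last (m+1))
      rw [hcoord] at h1
      have h2 : ‖wh + s • el‖ ≤ M := by
        have := hM hs
        rwa [Metric.mem_closedBall, dist_zero_right] at this
      calc s ≤ |s| := le_abs_self s
        _ ≤ M := h1.trans h2
    set s₀ := sSup Tset with hs₀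
    have hs₀T : s₀ ∈ Tset := hTclosed.csSup_mem ⟨0, h0T⟩ hTbdd
    set z := wh + s₀ • el with hz
    have hzK : z ∈ K := hs₀T
    have hzfr : z ∈ frontier K := by
      rw [frontier_eq_closure_inter_closure]
      refine ⟨subset_closure hzK, ?_⟩
      rw [Metric.mem_closure_iff]
      intro ε hε
      refine ⟨z + (ε/2) • el, fun hmem => ?_, ?_⟩
      · have : wh + (s₀ + ε/2) • el ∈ K := by
          rw [add_smul]
          convert hmem using 1
          rw [hz]; abel
        have hmem' : s₀ + ε/2 ∈ Tset := this
        have := le_csSup hTbdd hmem'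
        rw [← hs₀] at this
        linarith
      · rw [dist_eq_norm]
        have : z - (z + (ε/2) • el) = -((ε/2) • el) := by abel
        rw [this, norm_neg, norm_smul, Real.norm_eq_abs, abs_of_pos (by linarith)]
        have : ‖el‖ = 1 := by simp [hel, EuclideanSpace.norm_single]
        rw [this]; linarith
    refine ⟨z, hzfr, ?_⟩
    funext j
    show z (Fin.castSucc j) = w j
    have : z (Fin.castSucc j) = wh (Fin.castSucc j) + s₀ * el (Fin.castSucc j) := rfl
    rw [this, hel_cast, hwh_cast]; ring
  -- Step 2 : measure computation
  have hπ : (μH[d] : Measure (Fin (m+1) → ℝ)) = volume := by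
    rw [hd_def, show ((m+1:ℕ):ℝ) = ((Fintype.card (Fin (m+1)):ℕ):ℝ) by simp]
    exact hausdorffMeasure_pi_real
  have hBmeas : MeasurableSet {g : Fin m → ℝ | ∑ j, (g j)^2 ≤ (r/2)^2} :=
    (isClosed_le (by fun_prop) continuous_const).measurableSet
  have hDvol : volume D = ENNReal.ofReal (R/2) * (ENNReal.ofReal ((r/2)^m) *
      volume (Metric.closedBall (0 : EuclideanSpace ℝ (Fin m)) 1)) := by
    set B : Set (Fin m → ℝ) := {g | ∑ j, (g j)^2 ≤ (r/2)^2} with hB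
    set e := MeasurableEquiv.piFinSuccAbove (fun _ : Fin (m+1) => ℝ) 0 with he
    have hDeq : D = e ⁻¹' ((Icc (0:ℝ) (R/2)) ×ˢ B) := by
      ext w
      simp only [hDdef, mem_setOf_eq, mem_preimage, mem_prod, he,
        MeasurableEquiv.piFinSuccAbove_apply, hB]
      have hrem : ∀ (w : Fin (m+1) → ℝ) (j : Fin m), Fin.removeNth 0 w j = w j.succ := by
        intro w j
        simp [Fin.removeNth, Fin.zero_succAbove]
      constructor
      · rintro ⟨h1, h2⟩
        refine ⟨h1, ?_⟩
        calc ∑ j : Fin m, (Fin.removeNth 0 w j)^2 = ∑ j : Fin m, (w j.succ)^2 :=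
              Finset.sum_congr rfl fun j _ => by rw [hrem]
          _ ≤ (r/2)^2 := h2
      · rintro ⟨h1, h2⟩
        refine ⟨h1, ?_⟩
        calc ∑ j : Fin m, (w j.succ)^2 = ∑ j : Fin m, (Fin.removeNth 0 w j)^2 :=
              Finset.sum_congr rfl fun j _ => by rw [hrem]
          _ ≤ (r/2)^2 := h2
    have hvolD : volume D = volume ((Icc (0:ℝ) (R/2)) ×ˢ B) := by
      rw [hDeq]
      exact (volume_preserving_piFinSuccAbove (fun _ : Fin (m+1) => ℝ) 0).measure_preimage
        ((measurableSet_Icc.prod hBmeas)).nullMeasurableSet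
    have hprod : volume ((Icc (0:ℝ) (R/2)) ×ˢ B) = ENNReal.ofReal (R/2) * volume B := by
      rw [Measure.volume_eq_prod, Measure.prod_prod, Real.volume_Icc, sub_zero]
    have hvolB : volume B = volume (Metric.closedBall (0 : EuclideanSpace ℝ (Fin m)) (r/2)) := by
      have := (EuclideanSpace.volume_preserving_symm_measurableEquiv_toLp (Fin m)).measure_preimage
        hBmeas.nullMeasurableSet
      rw [← this]
      congr 1
      ext x
      simp only [mem_preimage, hB, mem_setOf_eq, Metric.mem_closedBall, dist_zero_right,
        EuclideanSpace.norm_eq]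
      have heq : ∑ j, ((MeasurableEquiv.toLp 2 (Fin m → ℝ)).symm x j)^2 = ∑ j, ‖x j‖^2 :=
        Finset.sum_congr rfl fun j _ => by
          have : (MeasurableEquiv.toLp 2 (Fin m → ℝ)).symm x j = x j := rfl
          rw [this, Real.norm_eq_abs, sq_abs]
      have hnn : (0:ℝ) ≤ ∑ j, ‖x j‖^2 := by positivity
      constructor
      · intro h
        rw [heq] at h
        calc Real.sqrt (∑ j, ‖x j‖^2) ≤ Real.sqrt ((r/2)^2) := Real.sqrt_le_sqrt h
          _ = r/2 := Real.sqrt_sq (by positivity)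
      · intro h
        rw [heq]
        calc ∑ j, ‖x j‖^2 = Real.sqrt (∑ j, ‖x j‖^2) ^ 2 := (Real.sq_sqrt hnn).symm
          _ ≤ (r/2)^2 := pow_le_pow_left₀ (Real.sqrt_nonneg _) h 2
    have hball2 : volume (Metric.closedBall (0 : EuclideanSpace ℝ (Fin m)) (r/2)) =
        ENNReal.ofReal ((r/2)^m) * volume (Metric.closedBall (0 : EuclideanSpace ℝ (Fin m)) 1) := by
      rw [Measure.addHaar_closedBall' volume 0 (by positivity)]
      congr 2
      simp [finrank_euclideanSpace_fin]
    rw [hvolD, hprod, hvolB, hball2]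
  calc ENNReal.ofReal (R/2) * (ENNReal.ofReal ((r/2)^m) *
      volume (Metric.closedBall (0 : EuclideanSpace ℝ (Fin m)) 1))
      = volume D := hDvol.symm
    _ = μH[d] D := by rw [hπ]
    _ ≤ μH[d] (Q '' frontier K) := measure_mono hstep1
    _ ≤ ((1:ℝ≥0) : ℝ≥0∞) ^ d * μH[d] (frontier K) := hQ.hausdorffMeasure_image_le hd _
    _ = μH[d] (frontier K) := by simp

/-- Lemma 2.1(ii): if `r·Bⁿ ⊆ K` then `K ⊆ R₀·Bⁿ` with
`R₀ = 2^{n−1}·κ_{n−2}⁻¹·r^{−(n−2)}·H^{n−1}(∂K)`. -/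
theorem stmt_6 {n : ℕ} (hn : 2 ≤ n) (K : Set (EuclideanSpace ℝ (Fin n)))
    (hKne : K.Nonempty) (hKcomp : IsCompact K) (hKconv : Convex ℝ K)
    (r : ℝ) (hr : 0 < r)
    (hball : Metric.closedBall (0 : EuclideanSpace ℝ (Fin n)) r ⊆ K) :
    K ⊆ Metric.closedBall 0
      (2 ^ (n - 1) * (unitBallVol (n - 2))⁻¹ * (r ^ (n - 2))⁻¹ *
        (μH[(n : ℝ) - 1] (frontier K)).toReal) := by
  obtain ⟨m, rfl⟩ := Nat.exists_eq_add_of_le' hn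
  have hsub1 : m + 2 - 1 = m + 1 := by omega
  have hsub2 : m + 2 - 2 = m := by omega
  have hexp : ((m+2 : ℕ) : ℝ) - 1 = ((m+1 : ℕ) : ℝ) := by push_cast; ring
  rw [hsub1, hsub2, hexp]
  set μ := μH[((m+1:ℕ):ℝ)] (frontier K) with hμ
  have hμtop : μ < ⊤ := frontier_measure_lt_top hKne hKcomp hKconv
  set κ := unitBallVol m with hκ
  have hVne : volume (Metric.closedBall (0 : EuclideanSpace ℝ (Fin m)) 1) ≠ ⊤ :=
    (isCompact_closedBall _ _).measure_lt_top.ne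
  have hκ0 : 0 < κ := by
    rw [hκ, unitBallVol]
    exact ENNReal.toReal_pos (Metric.measure_closedBall_pos volume _ one_pos).ne' hVne
  intro x hx
  rw [Metric.mem_closedBall, dist_zero_right]
  rcases eq_or_lt_of_le (norm_nonneg x) with h0 | hRpos
  · rw [← h0]
    refine mul_nonneg (mul_nonneg (mul_nonneg (by positivity) (inv_nonneg.2 hκ0.le))
      (inv_nonneg.2 (by positivity))) ENNReal.toReal_nonneg
  · set R := ‖x‖ with hR
    set u : EuclideanSpace ℝ (Fin (m+2)) := R⁻¹ • x with hu
    have hunorm : ‖u‖ = 1 := by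
      rw [hu, norm_smul, norm_inv, Real.norm_eq_abs, abs_of_pos hRpos, ← hR,
        inv_mul_cancel₀ hRpos.ne']
    have horth : Orthonormal ℝ (Set.restrict {(0 : Fin (m+2))} (fun _ => u)) := by
      rw [orthonormal_iff_ite]
      intro i j
      have hij : i = j := Subsingleton.elim i j
      subst hij
      simp only [Set.restrict_apply, if_pos rfl]
      have : ⟪u, u⟫ = ‖u‖ ^ 2 := real_inner_self_eq_norm_sq u
      show ⟪u, u⟫ = _; rw [this, hunorm]; norm_num
    obtain ⟨b, hb⟩ := horth.exists_orthonormalBasis_extension_of_card_eq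
      (by simp [finrank_euclideanSpace]) 
    have hb0 : b 0 = u := hb 0 (mem_singleton _)
    set g := b.repr with hg
    set K' := ⇑g '' K with hK'
    have hK'comp : IsCompact K' := hKcomp.image g.continuous
    have hK'conv : Convex ℝ K' := hKconv.is_linear_image ⟨g.map_add, g.map_smul⟩
    have hK'ball : Metric.closedBall 0 r ⊆ K' := by
      intro y hy
      refine ⟨g.symm y, hball ?_, by simp⟩
      rw [Metric.mem_closedBall, dist_zero_right] at hy ⊢
      rwa [LinearIsometryEquiv.norm_map]
    have hx' : R • EuclideanSpace.single (0 : Fin (m+2)) (1:ℝ) ∈ K' := by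
      refine ⟨x, hx, ?_⟩
      calc g x = g (R • u) := by rw [hu, smul_inv_smul₀ hRpos.ne']
        _ = R • g u := by rw [LinearIsometryEquiv.map_smul]
        _ = R • EuclideanSpace.single 0 1 := by rw [← hb0, hg, OrthonormalBasis.repr_self]
    have hfr : μH[((m+1:ℕ):ℝ)] (frontier K') = μ := by
      have h1 : frontier K' = ⇑g '' frontier K := by
        rw [hK']
        simpa [LinearIsometryEquiv.coe_toHomeomorph] using (g.toHomeomorph.image_frontier K).symm
      rw [h1, hμ]
      exact g.isometry.hausdorffMeasure_image (Or.inl (by positivity)) _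
    have hkey := key_lower hK'comp.isClosed hK'comp.isBounded hK'conv hr hRpos hK'ball hx'
    rw [hfr] at hkey
    have hVeq : volume (Metric.closedBall (0 : EuclideanSpace ℝ (Fin m)) 1) =
        ENNReal.ofReal κ := by rw [hκ, unitBallVol, ENNReal.ofReal_toReal hVne]
    rw [hVeq, ← ENNReal.ofReal_mul (by positivity),
      ← ENNReal.ofReal_mul (by positivity)] at hkey
    have hreal : R/2 * ((r/2)^m * κ) ≤ μ.toReal :=
      (ENNReal.ofReal_le_iff_le_toReal hμtop.ne).1 hkey
    have h2m : ((r:ℝ)/2)^m = r^m / 2^m := div_pow r 2 m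
    have h3 : R * (r^m * κ) ≤ 2^(m+1) * μ.toReal := by
      calc R * (r^m * κ) = 2^(m+1) * (R/2 * ((r/2)^m * κ)) := by
            rw [h2m, pow_succ]
            field_simp
        _ ≤ 2^(m+1) * μ.toReal :=
            mul_le_mul_of_nonneg_left hreal (by positivity)
    have hκne : κ ≠ 0 := hκ0.ne'
    have hrmne : (r:ℝ)^m ≠ 0 := by positivity
    rw [show (2:ℝ)^(m+1) * κ⁻¹ * (r^m)⁻¹ * μ.toReal =
        (2^(m+1) * μ.toReal) / (r^m * κ) by rw [div_eq_mul_inv, mul_inv]; ring]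
    rw [le_div_iff₀ (by positivity)]
    exact h3
end
end

section
/- For every n ≥ 2 there is a constant c_n > 0 with the following property: whenever K' ⊆ K are origin-symmetric convex bodies in ℝⁿ (K = −K and K' = −K'), one has δ₂(K',K)² ≤ c_n · w(K)^{1−1/n} · (w(K) − w(K'))^{1+1/n}, where δ₂(K',K)² = ∫_{S^{n−1}} (h(K,u) − h(K',u))² dH^{n−1}(u). (Lemma 3.2 of the paper, obtained from Lemma 3.1 together with the Cauchy–Schwarz estimate δ₂² ≤ δ_∞·δ₁ and δ₁(K',K) = (ω_n/2)(w(K) − w(K')).) -/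
open MeasureTheory Set Pointwise
open scoped RealInnerProductSpace ENNReal NNReal

noncomputable section

namespace Aux32

variable {n : ℕ} {K K' : Set (EuclideanSpace ℝ (Fin n))} {u v x : EuclideanSpace ℝ (Fin n)}

lemma bddAbove_inner (hK : IsCompact K) (u : EuclideanSpace ℝ (Fin n)) :
    BddAbove ((fun x => ⟪u, x⟫) '' K) :=
  (hK.image (continuous_const.inner continuous_id)).bddAbove

lemma inner_le_suppFn (hK : IsCompact K) (hx : x ∈ K) (u : EuclideanSpace ℝ (Fin n)) :
    ⟪u, x⟫ ≤ suppFn K u :=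
  le_csSup (bddAbove_inner hK u) ⟨x, hx, rfl⟩

lemma suppFn_le (hK : K.Nonempty) {b : ℝ} (h : ∀ x ∈ K, ⟪u, x⟫ ≤ b) : suppFn K u ≤ b :=
  csSup_le (hK.image _) (by rintro y ⟨x, hx, rfl⟩; exact h x hx)

lemma suppFn_mono (hK : IsCompact K) (hK' : K'.Nonempty) (hsub : K' ⊆ K) :
    suppFn K' u ≤ suppFn K u :=
  csSup_le_csSup (bddAbove_inner hK u) (hK'.image _) (image_mono hsub)

lemma suppFn_nonneg (hK : IsCompact K) (h0 : (0 : EuclideanSpace ℝ (Fin n)) ∈ K) :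
    0 ≤ suppFn K u := by
  simpa using inner_le_suppFn hK h0 u

lemma suppFn_le_of_norm_le (hK : K.Nonempty) {R : ℝ} (hR : ∀ x ∈ K, ‖x‖ ≤ R)
    (hu : ‖u‖ = 1) : suppFn K u ≤ R := by
  refine suppFn_le hK fun x hx => ?_
  calc ⟪u, x⟫ ≤ ‖u‖ * ‖x‖ := real_inner_le_norm u x
    _ ≤ R := by rw [hu, one_mul]; exact hR x hx

lemma suppFn_sub_le (hK : K.Nonempty) (hKc : IsCompact K) {R : ℝ}
    (hR : ∀ x ∈ K, ‖x‖ ≤ R) (u v : EuclideanSpace ℝ (Fin n)) :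
    suppFn K u - suppFn K v ≤ R * ‖u - v‖ := by
  rw [sub_le_iff_le_add]
  refine suppFn_le hK fun x hx => ?_
  have h1 : ⟪u, x⟫ = ⟪v, x⟫ + ⟪u - v, x⟫ := by rw [inner_sub_left]; ring
  have h2 : ⟪u - v, x⟫ ≤ ‖u - v‖ * ‖x‖ := real_inner_le_norm _ _
  have h3 : ‖u - v‖ * ‖x‖ ≤ ‖u - v‖ * R :=
    mul_le_mul_of_nonneg_left (hR x hx) (norm_nonneg _)
  have h4 := inner_le_suppFn hKc hx v
  rw [h1]; nlinarith [norm_nonneg (u - v)]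

lemma abs_suppFn_sub_le (hK : K.Nonempty) (hKc : IsCompact K) {R : ℝ}
    (hR : ∀ x ∈ K, ‖x‖ ≤ R) (u v : EuclideanSpace ℝ (Fin n)) :
    |suppFn K u - suppFn K v| ≤ R * ‖u - v‖ := by
  rw [abs_sub_le_iff]
  refine ⟨suppFn_sub_le hK hKc hR u v, ?_⟩
  have := suppFn_sub_le hK hKc hR v u
  rwa [norm_sub_rev] at this

lemma continuous_suppFn (hK : K.Nonempty) (hKc : IsCompact K) :
    Continuous (suppFn K) := by
  obtain ⟨R, hR⟩ : ∃ R : ℝ, ∀ x ∈ K, ‖x‖ ≤ R := by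
    obtain ⟨R, hR⟩ := hKc.isBounded.subset_closedBall 0
    exact ⟨R, fun x hx => by simpa using hR hx⟩
  have hR0 : 0 ≤ R := le_trans (norm_nonneg _) (hR _ hK.choose_spec)
  refine (LipschitzWith.of_dist_le_mul (K := ⟨R, hR0⟩) fun u v => ?_).continuous
  rw [dist_eq_norm, dist_eq_norm]
  exact (abs_suppFn_sub_le hK hKc hR u v).trans (le_refl _)

lemma suppFn_neg_symm (hsymm : K = -K) (u : EuclideanSpace ℝ (Fin n)) :
    suppFn K (-u) = suppFn K u := by
  unfold suppFn
  congr 1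
  ext y
  constructor
  · rintro ⟨x, hx, rfl⟩
    refine ⟨-x, ?_, by simp⟩
    have : x ∈ -K := hsymm ▸ hx
    simpa using this
  · rintro ⟨x, hx, rfl⟩
    refine ⟨-x, ?_, by simp⟩
    rw [hsymm]; simpa using hx

end Aux32

namespace Aux32

lemma sqrt_diff_le {c a b : ℝ} (hc : 0 < c) (ha : c ≤ a) (hb : 0 ≤ b) :
    |Real.sqrt a - Real.sqrt b| ≤ |a - b| / Real.sqrt c := by
  have ha0 : (0:ℝ) ≤ a := hc.le.trans ha
  have hsc : 0 < Real.sqrt c := Real.sqrt_pos.2 hc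
  rw [le_div_iff₀ hsc]
  have key : (Real.sqrt a - Real.sqrt b) * (Real.sqrt a + Real.sqrt b) = a - b := by
    have h1 := Real.sq_sqrt ha0
    have h2 := Real.sq_sqrt hb
    nlinarith
  calc |Real.sqrt a - Real.sqrt b| * Real.sqrt c
      ≤ |Real.sqrt a - Real.sqrt b| * (Real.sqrt a + Real.sqrt b) := by
        refine mul_le_mul_of_nonneg_left ?_ (abs_nonneg _)
        have h3 := Real.sqrt_le_sqrt ha
        have h4 := Real.sqrt_nonneg b
        linarith
    _ = |(Real.sqrt a - Real.sqrt b) * (Real.sqrt a + Real.sqrt b)| := by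
        rw [abs_mul, abs_of_nonneg (by positivity : (0:ℝ) ≤ Real.sqrt a + Real.sqrt b)]
    _ = |a - b| := by rw [key]

lemma coord_le_norm {m : ℕ} (x : EuclideanSpace ℝ (Fin m)) (i : Fin m) : ‖x i‖ ≤ ‖x‖ := by
  rw [EuclideanSpace.norm_eq]
  have h : ‖x i‖ = Real.sqrt (‖x i‖ ^ 2) := (Real.sqrt_sq (norm_nonneg _)).symm
  rw [h]
  exact Real.sqrt_le_sqrt (Finset.single_le_sum (f := fun j => ‖x j‖ ^ 2)
    (fun j _ => by positivity) (Finset.mem_univ i))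

lemma hpi_eq (m : ℕ) : (μH[(m : ℝ)] : Measure (Fin m → ℝ)) = volume := by
  have h := hausdorffMeasure_pi_real (ι := Fin m)
  simpa [Fintype.card_fin] using h

/-- Lower bound for the `m`-dimensional Hausdorff measure of Euclidean balls. -/
lemma eball_lower (m : ℕ) (hm : 0 < m) {r : ℝ} (hr0 : 0 ≤ r) :
    ENNReal.ofReal ((2 / Real.sqrt m * r) ^ m) ≤
      μH[(m : ℝ)] (Metric.closedBall (0 : EuclideanSpace ℝ (Fin m)) r) := by
  have hm0 : (0:ℝ) ≤ (m:ℝ) := Nat.cast_nonneg m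
  have hmpos : (0:ℝ) < (m:ℝ) := by exact_mod_cast hm
  have hsm : 0 < Real.sqrt m := Real.sqrt_pos.2 hmpos
  have hr' : (0:ℝ) ≤ r / Real.sqrt m := by positivity
  have hsub : Metric.closedBall (0 : Fin m → ℝ) (r / Real.sqrt m) ⊆
      (WithLp.equiv 2 (Fin m → ℝ)) '' (Metric.closedBall (0 : EuclideanSpace ℝ (Fin m)) r) := by
    intro x hx
    refine ⟨(WithLp.equiv 2 (Fin m → ℝ)).symm x, ?_, by simp⟩
    rw [Metric.mem_closedBall, dist_zero_right] at hx ⊢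
    rw [EuclideanSpace.norm_eq]
    have hxi : ∀ i, ‖x i‖ ≤ r / Real.sqrt m := fun i => (norm_le_pi_norm x i).trans hx
    have hsum : ∑ i, ‖((WithLp.equiv 2 (Fin m → ℝ)).symm x) i‖ ^ 2 ≤ r ^ 2 := by
      have : ∀ i : Fin m, ‖((WithLp.equiv 2 (Fin m → ℝ)).symm x) i‖ ^ 2 ≤ (r / Real.sqrt m)^2 := by
        intro i
        have := hxi i
        have h0 := norm_nonneg (x i)
        have : ‖((WithLp.equiv 2 (Fin m → ℝ)).symm x) i‖ ≤ r / Real.sqrt m := hxi i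
        nlinarith [norm_nonneg (((WithLp.equiv 2 (Fin m → ℝ)).symm x) i)]
      calc ∑ i, ‖((WithLp.equiv 2 (Fin m → ℝ)).symm x) i‖ ^ 2
          ≤ ∑ _i : Fin m, (r / Real.sqrt m) ^ 2 := Finset.sum_le_sum fun i _ => this i
        _ = m * (r / Real.sqrt m) ^ 2 := by
            rw [Finset.sum_const, Finset.card_univ, Fintype.card_fin, nsmul_eq_mul]
        _ = r ^ 2 := by
            rw [div_pow, Real.sq_sqrt hm0]
            field_simp
    calc Real.sqrt (∑ i, ‖((WithLp.equiv 2 (Fin m → ℝ)).symm x) i‖ ^ 2)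
        ≤ Real.sqrt (r ^ 2) := Real.sqrt_le_sqrt hsum
      _ = r := Real.sqrt_sq hr0
  calc ENNReal.ofReal ((2 / Real.sqrt m * r) ^ m)
      = volume (Metric.closedBall (0 : Fin m → ℝ) (r / Real.sqrt m)) := by
        rw [Real.volume_pi_closedBall _ hr', Fintype.card_fin]
        congr 1
        field_simp
    _ = μH[(m : ℝ)] (Metric.closedBall (0 : Fin m → ℝ) (r / Real.sqrt m)) := by rw [hpi_eq]
    _ ≤ μH[(m : ℝ)] ((WithLp.equiv 2 (Fin m → ℝ)) ''
          (Metric.closedBall (0 : EuclideanSpace ℝ (Fin m)) r)) := measure_mono hsub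
    _ ≤ _ := by
        have := (PiLp.lipschitzWith_ofLp 2 (fun _ : Fin m => ℝ)).hausdorffMeasure_image_le hm0
          (Metric.closedBall (0 : EuclideanSpace ℝ (Fin m)) r)
        simpa using this

lemma eball_upper (m : ℕ) : μH[(m : ℝ)] (Metric.closedBall (0 : EuclideanSpace ℝ (Fin m)) 1) < ⊤ := by
  have hm0 : (0:ℝ) ≤ (m:ℝ) := Nat.cast_nonneg m
  have hlip : LipschitzWith ((Fintype.card (Fin m) : ℝ≥0) ^ ((1:ℝ≥0∞) / 2).toReal)
      ((WithLp.equiv 2 (Fin m → ℝ)).symm) :=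
    PiLp.lipschitzWith_toLp 2 (fun _ : Fin m => ℝ)
  have hsub : Metric.closedBall (0 : EuclideanSpace ℝ (Fin m)) 1 ⊆
      (WithLp.equiv 2 (Fin m → ℝ)).symm '' (Metric.closedBall (0 : Fin m → ℝ) 1) := by
    intro x hx
    refine ⟨(WithLp.equiv 2 (Fin m → ℝ)) x, ?_, by simp⟩
    rw [Metric.mem_closedBall, dist_zero_right] at hx ⊢
    rw [pi_norm_le_iff_of_nonneg zero_le_one]
    exact fun i => (coord_le_norm x i).trans hx
  calc μH[(m : ℝ)] (Metric.closedBall (0 : EuclideanSpace ℝ (Fin m)) 1)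
      ≤ μH[(m : ℝ)] ((WithLp.equiv 2 (Fin m → ℝ)).symm ''
          (Metric.closedBall (0 : Fin m → ℝ) 1)) := measure_mono hsub
    _ ≤ (((Fintype.card (Fin m) : ℝ≥0) ^ ((1:ℝ≥0∞) / 2).toReal : ℝ≥0) : ℝ≥0∞) ^ (m:ℝ) *
          μH[(m : ℝ)] (Metric.closedBall (0 : Fin m → ℝ) 1) :=
        hlip.hausdorffMeasure_image_le hm0 _
    _ < ⊤ := by
        rw [hpi_eq]
        refine ENNReal.mul_lt_top ?_ ?_
        · exact ENNReal.rpow_lt_top_of_nonneg hm0 ENNReal.coe_ne_top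
        · rw [Real.volume_pi_closedBall _ zero_le_one]
          exact ENNReal.ofReal_lt_top

end Aux32

section Geometry

open Module

variable {n : ℕ}

lemma exists_isometry_ortho (hn : 2 ≤ n) {u₀ : EuclideanSpace ℝ (Fin n)} (hu : u₀ ≠ 0) :
    ∃ ι : EuclideanSpace ℝ (Fin (n-1)) →ₗᵢ[ℝ] EuclideanSpace ℝ (Fin n),
      Set.range ⇑ι = ((ℝ ∙ u₀)ᗮ : Set (EuclideanSpace ℝ (Fin n))) := by
  have hW : finrank ℝ ((ℝ ∙ u₀)ᗮ : Submodule ℝ (EuclideanSpace ℝ (Fin n))) = n - 1 := by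
    have h1 : finrank ℝ (ℝ ∙ u₀) = 1 := finrank_span_singleton hu
    have h2 := Submodule.finrank_add_finrank_orthogonal (K := (ℝ ∙ u₀))
    rw [finrank_euclideanSpace_fin, h1] at h2
    omega
  set W := (ℝ ∙ u₀)ᗮ with hWdef
  let b := (stdOrthonormalBasis ℝ W).reindex (finCongr hW)
  refine ⟨W.subtypeₗᵢ.comp b.repr.symm.toLinearIsometry, ?_⟩
  have hsurj : Function.Surjective ⇑b.repr.symm.toLinearIsometry :=
    b.repr.symm.surjective
  have : Set.range (⇑(W.subtypeₗᵢ.comp b.repr.symm.toLinearIsometry)) =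
      Set.range ⇑W.subtypeₗᵢ := by
    rw [LinearIsometry.coe_comp, Set.range_comp, hsurj.range_eq, Set.image_univ]
  rw [this]
  exact Subtype.range_coe

lemma proj_lemma {u₀ : EuclideanSpace ℝ (Fin n)} (hu : ‖u₀‖ = 1)
    (v : EuclideanSpace ℝ (Fin n)) : ‖v - ⟪v, u₀⟫ • u₀‖ ≤ ‖v‖ := by
  have h1 : ‖v - ⟪v, u₀⟫ • u₀‖ ^ 2 = ‖v‖ ^ 2 - ⟪v, u₀⟫ ^ 2 := by
    rw [norm_sub_sq_real, real_inner_smul_right, norm_smul, hu, mul_one]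
    simp only [Real.norm_eq_abs, sq_abs]
    ring
  have h2 : ‖v - ⟪v, u₀⟫ • u₀‖ ^ 2 ≤ ‖v‖ ^ 2 := by nlinarith [sq_nonneg ⟪v, u₀⟫]
  have := Real.sqrt_le_sqrt h2
  rwa [Real.sqrt_sq (norm_nonneg _), Real.sqrt_sq (norm_nonneg _)] at this

lemma lipschitz_proj {u₀ : EuclideanSpace ℝ (Fin n)} (hu : ‖u₀‖ = 1) :
    LipschitzWith 1 (fun z : EuclideanSpace ℝ (Fin n) => z - ⟪z, u₀⟫ • u₀) := by
  refine LipschitzWith.of_dist_le_mul fun z w => ?_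
  rw [dist_eq_norm, dist_eq_norm, NNReal.coe_one, one_mul]
  have heq : (z - ⟪z, u₀⟫ • u₀) - (w - ⟪w, u₀⟫ • u₀)
      = (z - w) - ⟪z - w, u₀⟫ • u₀ := by
    rw [inner_sub_left, sub_smul]
    abel
  rw [heq]
  exact proj_lemma hu _

end Geometry

section Cap

variable {n : ℕ}

lemma cap_lower (hn : 2 ≤ n) {u₀ : EuclideanSpace ℝ (Fin n)} (hu : ‖u₀‖ = 1)
    {ρ : ℝ} (hρ0 : 0 < ρ) (hρ1 : ρ ≤ 1) :
    ENNReal.ofReal ((2 / Real.sqrt (n-1 : ℕ) / Real.sqrt 2) ^ (n-1) * ρ ^ (n-1)) ≤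
      μH[(n:ℝ)-1] (Metric.sphere (0 : EuclideanSpace ℝ (Fin n)) 1 ∩ Metric.closedBall u₀ ρ) := by
  have hd0 : (0:ℝ) ≤ (n:ℝ) - 1 := by
    have : (2:ℝ) ≤ (n:ℝ) := by exact_mod_cast hn
    linarith
  have hcast : ((n:ℝ) - 1) = ((n - 1 : ℕ) : ℝ) := by
    have h1 : (1:ℕ) ≤ n := by omega
    push_cast [Nat.cast_sub h1]
    ring
  have hu0 : u₀ ≠ 0 := by
    intro h; rw [h, norm_zero] at hu; exact one_ne_zero hu.symm
  obtain ⟨ι, hι⟩ := exists_isometry_ortho hn hu0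
  have hsub : ⇑ι '' (Metric.closedBall 0 (ρ / Real.sqrt 2)) ⊆
      (fun z : EuclideanSpace ℝ (Fin n) => z - ⟪z, u₀⟫ • u₀) ''
        (Metric.sphere (0 : EuclideanSpace ℝ (Fin n)) 1 ∩ Metric.closedBall u₀ ρ) := by
    rintro _ ⟨x, hx, rfl⟩
    rw [Metric.mem_closedBall, dist_zero_right] at hx
    have hy_mem : ι x ∈ (ℝ ∙ u₀)ᗮ := by
      have : ι x ∈ Set.range ⇑ι := ⟨x, rfl⟩
      rwa [hι] at this
    have hyu : ⟪u₀, ι x⟫ = 0 := Submodule.mem_orthogonal_singleton_iff_inner_right.mp hy_mem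
    have hyu' : ⟪ι x, u₀⟫ = 0 := by rw [real_inner_comm]; exact hyu
    have hyn : ‖ι x‖ ≤ ρ / Real.sqrt 2 := by rw [ι.norm_map]; exact hx
    have hs2' : Real.sqrt 2 ^ 2 = 2 := Real.sq_sqrt (by norm_num)
    have hsqrt2 : 0 < Real.sqrt 2 := Real.sqrt_pos.2 (by norm_num)
    have h2 : ‖ι x‖ ^ 2 ≤ ρ ^ 2 / 2 := by
      have h0 := norm_nonneg (ι x)
      have : ‖ι x‖ ^ 2 ≤ (ρ / Real.sqrt 2) ^ 2 := by nlinarith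
      rwa [div_pow, hs2'] at this
    have hy1 : ‖ι x‖ ^ 2 ≤ 1 := by nlinarith
    set s := Real.sqrt (1 - ‖ι x‖ ^ 2) with hs
    have h1y : 0 ≤ 1 - ‖ι x‖ ^ 2 := by linarith
    have hs0 : 0 ≤ s := Real.sqrt_nonneg _
    have hs2 : s ^ 2 = 1 - ‖ι x‖ ^ 2 := Real.sq_sqrt h1y
    have hs1 : s ≤ 1 := by
      rw [hs]
      exact Real.sqrt_le_one.mpr (by nlinarith)
    set u := ι x + s • u₀ with hudef
    have hun : ‖u‖ = 1 := by
      have hsq : ‖u‖ ^ 2 = 1 := by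
        rw [hudef, norm_add_sq_real, real_inner_smul_right, hyu', norm_smul, hu,
          Real.norm_eq_abs, mul_one, mul_zero, sq_abs]
        nlinarith
      have h' : ‖u‖ = Real.sqrt (‖u‖ ^ 2) := (Real.sqrt_sq (norm_nonneg u)).symm
      rw [h', hsq, Real.sqrt_one]
    have hud : u ∈ Metric.closedBall u₀ ρ := by
      rw [Metric.mem_closedBall, dist_eq_norm]
      have heq : u - u₀ = ι x + (s - 1) • u₀ := by
        rw [hudef, sub_smul, one_smul]; abel
      have hnsq : ‖u - u₀‖ ^ 2 ≤ ρ ^ 2 := by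
        rw [heq, norm_add_sq_real, real_inner_smul_right, hyu', norm_smul, hu,
          Real.norm_eq_abs, mul_one, mul_zero, sq_abs]
        nlinarith [sq_nonneg (1 - s), sq_nonneg (‖ι x‖^2)]
      have := Real.sqrt_le_sqrt hnsq
      rwa [Real.sqrt_sq (norm_nonneg _), Real.sqrt_sq hρ0.le] at this
    refine ⟨u, ⟨mem_sphere_zero_iff_norm.mpr hun, hud⟩, ?_⟩
    have hinner : ⟪u, u₀⟫ = s := by
      rw [hudef, inner_add_left, real_inner_smul_left, hyu',
        real_inner_self_eq_norm_sq, hu]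
      ring
    show u - ⟪u, u₀⟫ • u₀ = ι x
    rw [hinner, hudef]
    abel
  calc ENNReal.ofReal ((2 / Real.sqrt (n-1 : ℕ) / Real.sqrt 2) ^ (n-1) * ρ ^ (n-1))
      = ENNReal.ofReal ((2 / Real.sqrt (n-1 : ℕ) * (ρ / Real.sqrt 2)) ^ (n-1)) := by
        rw [← mul_pow]; congr 2; ring
    _ ≤ μH[((n-1 : ℕ) : ℝ)]
          (Metric.closedBall (0 : EuclideanSpace ℝ (Fin (n-1))) (ρ / Real.sqrt 2)) :=
        Aux32.eball_lower (n-1) (by omega) (by positivity)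
    _ = μH[(n:ℝ)-1]
          (Metric.closedBall (0 : EuclideanSpace ℝ (Fin (n-1))) (ρ / Real.sqrt 2)) := by
        rw [hcast]
    _ = μH[(n:ℝ)-1] (⇑ι '' (Metric.closedBall 0 (ρ / Real.sqrt 2))) :=
        (ι.isometry.hausdorffMeasure_image (Or.inl hd0) _).symm
    _ ≤ μH[(n:ℝ)-1] ((fun z : EuclideanSpace ℝ (Fin n) => z - ⟪z, u₀⟫ • u₀) ''
          (Metric.sphere (0 : EuclideanSpace ℝ (Fin n)) 1 ∩ Metric.closedBall u₀ ρ)) :=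
        measure_mono hsub
    _ ≤ μH[(n:ℝ)-1] (Metric.sphere (0 : EuclideanSpace ℝ (Fin n)) 1 ∩ Metric.closedBall u₀ ρ) := by
        have := (lipschitz_proj hu).hausdorffMeasure_image_le hd0
          (Metric.sphere (0 : EuclideanSpace ℝ (Fin n)) 1 ∩ Metric.closedBall u₀ ρ)
        simpa using this

end Cap

section Fin1

variable {n : ℕ}

set_option maxHeartbeats 1000000 in
lemma hemi_lt_top (hn : 2 ≤ n) {u₀ : EuclideanSpace ℝ (Fin n)} (hu : ‖u₀‖ = 1) :
    μH[(n:ℝ)-1] {u : EuclideanSpace ℝ (Fin n) |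
      ‖u‖ = 1 ∧ Real.sqrt (1/n) ≤ ⟪u, u₀⟫} < ⊤ := by
  have hd0 : (0:ℝ) ≤ (n:ℝ) - 1 := by
    have : (2:ℝ) ≤ (n:ℝ) := by exact_mod_cast hn
    linarith
  have hcast : ((n:ℝ) - 1) = ((n - 1 : ℕ) : ℝ) := by
    have h1 : (1:ℕ) ≤ n := by omega
    push_cast [Nat.cast_sub h1]
    ring
  have hnpos : (0:ℝ) < (n:ℝ) := by positivity
  have hτpos : 0 < Real.sqrt (1/n) := Real.sqrt_pos.2 (by positivity)
  have hτ2 : Real.sqrt (1/n) ^ 2 = 1/n := Real.sq_sqrt (by positivity)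
  set rb := Real.sqrt (1 - 1/n) with hrb
  have h1n : (0:ℝ) ≤ 1 - 1/n := by
    rw [sub_nonneg, div_le_one hnpos]
    exact_mod_cast Nat.one_le_of_lt hn
  have hrb2 : rb ^ 2 = 1 - 1/n := Real.sq_sqrt h1n
  have hrb1 : rb ≤ 1 := Real.sqrt_le_one.mpr (by linarith [one_div_pos.mpr hnpos])
  have hrb0 : 0 ≤ rb := Real.sqrt_nonneg _
  have hu0 : u₀ ≠ 0 := by
    intro h; rw [h, norm_zero] at hu; exact one_ne_zero hu.symm
  obtain ⟨ι, hι⟩ := exists_isometry_ortho hn hu0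
  set L : ℝ := 1 + 2 / Real.sqrt (1/n) with hL
  have hL0 : 0 ≤ L := by positivity
  set g : EuclideanSpace ℝ (Fin (n-1)) → EuclideanSpace ℝ (Fin n) :=
    fun x => ι x + Real.sqrt (1 - ‖x‖^2) • u₀ with hg
  have hgl : LipschitzOnWith L.toNNReal g (Metric.closedBall 0 rb) := by
    rw [lipschitzOnWith_iff_dist_le_mul]
    intro x hx x' hx'
    rw [Metric.mem_closedBall, dist_zero_right] at hx hx'
    have hx1 : ‖x‖ ≤ 1 := hx.trans hrb1
    have hx'1 : ‖x'‖ ≤ 1 := hx'.trans hrb1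
    have hcx : 1/(n:ℝ) ≤ 1 - ‖x‖^2 := by nlinarith [norm_nonneg x]
    have hcx' : (0:ℝ) ≤ 1 - ‖x'‖^2 := by nlinarith [norm_nonneg x']
    have hab := Aux32.sqrt_diff_le (by positivity : (0:ℝ) < 1/n) hcx hcx'
    have habs : |(1 - ‖x‖^2) - (1 - ‖x'‖^2)| ≤ 2 * ‖x - x'‖ := by
      have heq : (1 - ‖x‖^2) - (1 - ‖x'‖^2) = (‖x'‖ - ‖x‖) * (‖x'‖ + ‖x‖) := by ring
      rw [heq, abs_mul, abs_of_nonneg (by positivity : (0:ℝ) ≤ ‖x'‖ + ‖x‖)]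
      have h1 : |‖x'‖ - ‖x‖| ≤ ‖x' - x‖ := abs_norm_sub_norm_le x' x
      have h2 : ‖x'‖ + ‖x‖ ≤ 2 := by linarith
      have h3 : ‖x' - x‖ = ‖x - x'‖ := norm_sub_rev x' x
      nlinarith [abs_nonneg (‖x'‖ - ‖x‖), norm_nonneg (x' - x)]
    rw [dist_eq_norm, dist_eq_norm]
    have hgdiff : g x - g x' = ι (x - x') +
        (Real.sqrt (1 - ‖x‖^2) - Real.sqrt (1 - ‖x'‖^2)) • u₀ := by
      rw [hg]; simp only [map_sub, sub_smul]; abel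
    have hτn0 : Real.sqrt (1/n) ≠ 0 := ne_of_gt hτpos
    calc ‖g x - g x'‖
        ≤ ‖ι (x - x')‖ + ‖(Real.sqrt (1 - ‖x‖^2) - Real.sqrt (1 - ‖x'‖^2)) • u₀‖ := by
          rw [hgdiff]; exact norm_add_le _ _
      _ = ‖x - x'‖ + |Real.sqrt (1 - ‖x‖^2) - Real.sqrt (1 - ‖x'‖^2)| := by
          rw [ι.norm_map, norm_smul, hu, mul_one, Real.norm_eq_abs]
      _ ≤ ‖x - x'‖ + (2 * ‖x - x'‖) / Real.sqrt (1/n) := by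
          have h5 : |Real.sqrt (1 - ‖x‖^2) - Real.sqrt (1 - ‖x'‖^2)| ≤
              (2 * ‖x - x'‖) / Real.sqrt (1/n) :=
            hab.trans (by gcongr)
          linarith
      _ = L.toNNReal * ‖x - x'‖ := by
          rw [Real.coe_toNNReal _ hL0, hL]
          field_simp
  have himg : {u : EuclideanSpace ℝ (Fin n) | ‖u‖ = 1 ∧ Real.sqrt (1/n) ≤ ⟪u, u₀⟫} ⊆
      g '' (Metric.closedBall 0 rb) := by
    rintro u ⟨hun, hτu⟩
    have hc0 : 0 ≤ ⟪u, u₀⟫ := hτpos.le.trans hτu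
    set c := ⟪u, u₀⟫ with hc
    set y := u - c • u₀ with hy
    have hyu : ⟪u₀, y⟫ = 0 := by
      rw [hy, inner_sub_right, real_inner_smul_right, real_inner_self_eq_norm_sq, hu]
      rw [hc, real_inner_comm]
      ring
    have hymem : y ∈ (ℝ ∙ u₀)ᗮ := Submodule.mem_orthogonal_singleton_iff_inner_right.mpr hyu
    have hymem' : y ∈ Set.range ⇑ι := by rw [hι]; simpa using hymem
    obtain ⟨x, hxy⟩ := hymem'
    have hynorm : ‖y‖ ^ 2 = 1 - c ^ 2 := by
      rw [hy, norm_sub_sq_real, real_inner_smul_right, norm_smul, hu,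
        Real.norm_eq_abs, mul_one, sq_abs, hun]
      ring
    have hxball : x ∈ Metric.closedBall (0 : EuclideanSpace ℝ (Fin (n-1))) rb := by
      rw [Metric.mem_closedBall, dist_zero_right]
      have h1 : ‖x‖ = ‖y‖ := by rw [← hxy, ι.norm_map]
      have h2 : ‖y‖ ^ 2 ≤ rb ^ 2 := by
        rw [hynorm, hrb2]
        have h3 : Real.sqrt (1/n) ^ 2 ≤ c ^ 2 := by nlinarith [hτpos.le]
        linarith [hτ2 ▸ h3]
      rw [h1]
      nlinarith [norm_nonneg y]
    refine ⟨x, hxball, ?_⟩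
    have h1 : ‖x‖ = ‖y‖ := by rw [← hxy, ι.norm_map]
    have h2 : 1 - ‖x‖^2 = c^2 := by rw [h1, hynorm]; ring
    rw [hg]
    simp only
    rw [hxy, h2, Real.sqrt_sq hc0, hy]
    abel
  calc μH[(n:ℝ)-1] {u : EuclideanSpace ℝ (Fin n) | ‖u‖ = 1 ∧ Real.sqrt (1/n) ≤ ⟪u, u₀⟫}
      ≤ μH[(n:ℝ)-1] (g '' (Metric.closedBall 0 rb)) := measure_mono himg
    _ ≤ (L.toNNReal : ℝ≥0∞) ^ ((n:ℝ)-1) * μH[(n:ℝ)-1] (Metric.closedBall 0 rb) :=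
        hgl.hausdorffMeasure_image_le hd0
    _ < ⊤ := by
        refine ENNReal.mul_lt_top (ENNReal.rpow_lt_top_of_nonneg hd0 ENNReal.coe_ne_top) ?_
        have hmono : (Metric.closedBall (0 : EuclideanSpace ℝ (Fin (n-1))) rb) ⊆
            Metric.closedBall 0 1 := Metric.closedBall_subset_closedBall hrb1
        have hlt : μH[(n:ℝ)-1]
            (Metric.closedBall (0 : EuclideanSpace ℝ (Fin (n-1))) 1) < ⊤ := by
          rw [hcast]; exact Aux32.eball_upper (n-1)
        exact (measure_mono hmono).trans_lt hlt

end Fin1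

section Fin2

variable {n : ℕ}

lemma sphere_lt_top (hn : 2 ≤ n) :
    μH[(n:ℝ)-1] (Metric.sphere (0 : EuclideanSpace ℝ (Fin n)) 1) < ⊤ := by
  haveI : Nonempty (Fin n) := ⟨⟨0, by omega⟩⟩
  have hnpos : (0:ℝ) < (n:ℝ) := by positivity
  have hcover : Metric.sphere (0 : EuclideanSpace ℝ (Fin n)) 1 ⊆
      ⋃ p : Fin n × Bool, {u : EuclideanSpace ℝ (Fin n) | ‖u‖ = 1 ∧
        Real.sqrt (1/n) ≤ ⟪u, (if p.2 then (1:ℝ) else -1) • EuclideanSpace.single p.1 1⟫} := by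
    intro u hu
    rw [mem_sphere_zero_iff_norm] at hu
    have h0 : (0:ℝ) ≤ ∑ i, ‖u i‖^2 := by positivity
    have hsum : ∑ i, ‖u i‖ ^ 2 = 1 := by
      have h1 := EuclideanSpace.norm_eq u
      rw [hu] at h1
      nlinarith [Real.sq_sqrt h0]
    have hex : ∃ i, 1/(n:ℝ) ≤ ‖u i‖ ^ 2 := by
      by_contra hcon
      push_neg at hcon
      have hlt : ∑ i, ‖u i‖^2 < ∑ _i : Fin n, 1/(n:ℝ) :=
        Finset.sum_lt_sum_of_nonempty Finset.univ_nonempty fun i _ => hcon i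
      rw [Finset.sum_const, Finset.card_univ, Fintype.card_fin, nsmul_eq_mul] at hlt
      rw [mul_one_div, div_self (ne_of_gt hnpos)] at hlt
      linarith
    obtain ⟨i, hi⟩ := hex
    have habs : Real.sqrt (1/n) ≤ ‖u i‖ := by
      have h2 := Real.sqrt_le_sqrt hi
      rwa [Real.sqrt_sq (norm_nonneg _)] at h2
    rw [Real.norm_eq_abs] at habs
    rcases le_or_gt 0 (u i) with hpos | hneg
    · refine mem_iUnion.mpr ⟨(i, true), hu, ?_⟩
      have : ⟪u, (1:ℝ) • EuclideanSpace.single i (1:ℝ)⟫ = u i := by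
        rw [one_smul, EuclideanSpace.inner_single_right]
        simp
      rw [if_pos rfl] at *
      simp only [if_true]
      rw [this]
      rwa [abs_of_nonneg hpos] at habs
    · refine mem_iUnion.mpr ⟨(i, false), hu, ?_⟩
      have : ⟪u, (-1:ℝ) • EuclideanSpace.single i (1:ℝ)⟫ = -(u i) := by
        rw [real_inner_smul_right, EuclideanSpace.inner_single_right]
        simp
      simp only [if_false, Bool.false_eq_true]
      rw [this]
      rwa [abs_of_neg hneg] at habs
  refine (measure_mono hcover).trans_lt ?_
  refine (measure_iUnion_le _).trans_lt ?_
  rw [tsum_fintype]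
  refine ENNReal.sum_lt_top.mpr fun p _ => ?_
  refine hemi_lt_top hn ?_
  rw [norm_smul, EuclideanSpace.norm_single]
  rcases p.2 <;> simp

lemma sphere_meas_pos (hn : 2 ≤ n) :
    0 < μH[(n:ℝ)-1] (Metric.sphere (0 : EuclideanSpace ℝ (Fin n)) 1) := by
  have hsm : (0:ℝ) < Real.sqrt (n-1:ℕ) := by
    refine Real.sqrt_pos.2 ?_
    have : (1:ℕ) ≤ n - 1 := by omega
    exact_mod_cast Nat.lt_of_lt_of_le Nat.zero_lt_one this
  have hβ : (0:ℝ) < (2 / Real.sqrt (n-1:ℕ) / Real.sqrt 2) ^ (n-1) * 1 ^ (n-1) := by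
    have h2 : (0:ℝ) < Real.sqrt 2 := Real.sqrt_pos.2 (by norm_num)
    positivity
  set u₀ : EuclideanSpace ℝ (Fin n) := EuclideanSpace.single ⟨0, by omega⟩ (1:ℝ) with hu₀
  have hu : ‖u₀‖ = 1 := by rw [hu₀, EuclideanSpace.norm_single, norm_one]
  have hcap := cap_lower hn hu (zero_lt_one) (le_refl (1:ℝ))
  calc (0:ℝ≥0∞) < ENNReal.ofReal ((2 / Real.sqrt (n-1:ℕ) / Real.sqrt 2) ^ (n-1) * 1 ^ (n-1)) :=
        ENNReal.ofReal_pos.mpr hβ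
    _ ≤ μH[(n:ℝ)-1] (Metric.sphere (0 : EuclideanSpace ℝ (Fin n)) 1 ∩
          Metric.closedBall u₀ 1) := hcap
    _ ≤ μH[(n:ℝ)-1] (Metric.sphere (0 : EuclideanSpace ℝ (Fin n)) 1) :=
        measure_mono Set.inter_subset_left

end Fin2

section Integr

variable {n : ℕ}

lemma integrableOn_sphere
    (hfin : μH[(n:ℝ)-1] (Metric.sphere (0 : EuclideanSpace ℝ (Fin n)) 1) < ⊤)
    {g : EuclideanSpace ℝ (Fin n) → ℝ} (hg : Continuous g) {C : ℝ}
    (hC : ∀ u ∈ Metric.sphere (0 : EuclideanSpace ℝ (Fin n)) 1, |g u| ≤ C) :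
    IntegrableOn g (Metric.sphere (0 : EuclideanSpace ℝ (Fin n)) 1) μH[(n:ℝ)-1] := by
  haveI : IsFiniteMeasure
      (μH[(n:ℝ)-1].restrict (Metric.sphere (0 : EuclideanSpace ℝ (Fin n)) 1)) :=
    ⟨by rwa [Measure.restrict_apply_univ]⟩
  refine Integrable.mono' (integrable_const C) hg.aestronglyMeasurable ?_
  refine (ae_restrict_iff' Metric.isClosed_sphere.measurableSet).2 (ae_of_all _ ?_)
  intro u hu
  simpa [Real.norm_eq_abs] using hC u hu

/-- Lower bound for the spherical integral of `|⟪u, x₀⟫|`. -/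
lemma abs_inner_integral_ge (hn : 2 ≤ n) (x₀ : EuclideanSpace ℝ (Fin n)) :
    ‖x₀‖ * ((2 / Real.sqrt (n-1:ℕ) / Real.sqrt 2) ^ (n-1) / 2) ≤
      ∫ u in Metric.sphere (0 : EuclideanSpace ℝ (Fin n)) 1, |⟪u, x₀⟫| ∂μH[(n:ℝ)-1] := by
  set S := Metric.sphere (0 : EuclideanSpace ℝ (Fin n)) 1 with hS
  have hSmeas : MeasurableSet S := Metric.isClosed_sphere.measurableSet
  have hfin := sphere_lt_top hn
  set β : ℝ := (2 / Real.sqrt (n-1:ℕ) / Real.sqrt 2) ^ (n-1) with hβ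
  have hsm : (0:ℝ) < Real.sqrt (n-1:ℕ) := by
    refine Real.sqrt_pos.2 ?_
    have h1 : (1:ℕ) ≤ n - 1 := by omega
    exact_mod_cast Nat.lt_of_lt_of_le Nat.zero_lt_one h1
  have h2s : (0:ℝ) < Real.sqrt 2 := Real.sqrt_pos.2 (by norm_num)
  have hβpos : 0 < β := by rw [hβ]; positivity
  have hIntAbs : IntegrableOn (fun u => |⟪u, x₀⟫|) S μH[(n:ℝ)-1] := by
    refine integrableOn_sphere hfin ((continuous_id.inner continuous_const).abs) (C := ‖x₀‖) ?_
    intro u hu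
    rw [mem_sphere_zero_iff_norm] at hu
    rw [abs_abs]
    calc |⟪u, x₀⟫| ≤ ‖u‖ * ‖x₀‖ := abs_real_inner_le_norm u x₀
      _ = ‖x₀‖ := by rw [hu, one_mul]
  rcases eq_or_ne x₀ 0 with rfl | hx0
  · rw [norm_zero, zero_mul]
    exact setIntegral_nonneg hSmeas fun u _ => abs_nonneg _
  have hR : 0 < ‖x₀‖ := norm_pos_iff.mpr hx0
  set e := ‖x₀‖⁻¹ • x₀ with he
  have hue : ‖e‖ = 1 := by
    rw [he, norm_smul, norm_inv, norm_norm, inv_mul_cancel₀ (ne_of_gt hR)]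
  set cap := S ∩ Metric.closedBall e 1 with hcap
  have hcapmeas : MeasurableSet cap := hSmeas.inter measurableSet_closedBall
  have hcapfin : μH[(n:ℝ)-1] cap ≠ ⊤ :=
    ((measure_mono Set.inter_subset_left).trans_lt hfin).ne
  have hcaplow : ENNReal.ofReal (β * 1 ^ (n-1)) ≤ μH[(n:ℝ)-1] cap :=
    cap_lower hn hue zero_lt_one le_rfl
  have hcapToReal : β ≤ (μH[(n:ℝ)-1] cap).toReal := by
    have := (ENNReal.ofReal_le_iff_le_toReal hcapfin).1 hcaplow
    simpa using this
  have hpoint : ∀ u ∈ cap, ‖x₀‖ / 2 ≤ |⟪u, x₀⟫| := by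
    rintro u ⟨huS, hub⟩
    rw [mem_sphere_zero_iff_norm] at huS
    rw [Metric.mem_closedBall, dist_eq_norm] at hub
    have hin : 1/2 ≤ ⟪u, e⟫ := by
      have h1 : ‖u - e‖ ^ 2 = 2 - 2 * ⟪u, e⟫ := by
        rw [norm_sub_sq_real, huS, hue]; ring
      nlinarith [norm_nonneg (u - e)]
    have h2 : ⟪u, x₀⟫ = ‖x₀‖ * ⟪u, e⟫ := by
      rw [he, real_inner_smul_right]
      field_simp
    have h3 : ‖x₀‖/2 ≤ ⟪u, x₀⟫ := by
      rw [h2]; nlinarith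
    exact h3.trans (le_abs_self _)
  calc ‖x₀‖ * (β / 2)
      = (‖x₀‖ / 2) * β := by ring
    _ ≤ (‖x₀‖ / 2) * (μH[(n:ℝ)-1] cap).toReal := by
        refine mul_le_mul_of_nonneg_left hcapToReal (by positivity)
    _ ≤ ∫ u in cap, |⟪u, x₀⟫| ∂μH[(n:ℝ)-1] :=
        by have := setIntegral_ge_of_const_le_real hcapmeas hcapfin hpoint
             (hIntAbs.mono_set Set.inter_subset_left)
           simpa [Measure.real, smul_eq_mul, mul_comm] using this
    _ ≤ ∫ u in S, |⟪u, x₀⟫| ∂μH[(n:ℝ)-1] := by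
        refine setIntegral_mono_set hIntAbs ?_ (HasSubset.Subset.eventuallyLE Set.inter_subset_left)
        exact (ae_restrict_iff' hSmeas).2 (ae_of_all _ fun u _ => abs_nonneg _)

end Integr


set_option maxHeartbeats 2000000 in
/-- Lemma 3.2: there is `c_n > 0` such that for all origin-symmetric convex bodies
`K' ⊆ K` one has `δ₂(K',K)² ≤ c_n·w(K)^{1−1/n}·(w(K)−w(K'))^{1+1/n}`. -/
theorem stmt_12 {n : ℕ} (hn : 2 ≤ n) :
    ∃ c : ℝ, 0 < c ∧
      ∀ K K' : Set (EuclideanSpace ℝ (Fin n)),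
        K.Nonempty → IsCompact K → Convex ℝ K → K = -K →
        K'.Nonempty → IsCompact K' → Convex ℝ K' → K' = -K' →
        K' ⊆ K →
        (∫ u in Metric.sphere (0 : EuclideanSpace ℝ (Fin n)) 1,
            (suppFn K u - suppFn K' u) ^ 2 ∂μH[(n : ℝ) - 1]) ≤
          c * meanWidth K ^ (1 - 1 / (n : ℝ)) *
            (meanWidth K - meanWidth K') ^ (1 + 1 / (n : ℝ)) := by
  classical
  set S := Metric.sphere (0 : EuclideanSpace ℝ (Fin n)) 1 with hSdef
  have hSmeas : MeasurableSet S := Metric.isClosed_sphere.measurableSet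
  have hfin := sphere_lt_top hn
  have hpos := sphere_meas_pos hn
  set ω : ℝ := sphereArea n with hωdef
  have hωpos : 0 < ω := ENNReal.toReal_pos (ne_of_gt hpos) hfin.ne
  have hωne : ω ≠ 0 := ne_of_gt hωpos
  have hsm : (0:ℝ) < Real.sqrt (n-1:ℕ) := by
    refine Real.sqrt_pos.2 ?_
    have h1 : (1:ℕ) ≤ n - 1 := by omega
    exact_mod_cast Nat.lt_of_lt_of_le Nat.zero_lt_one h1
  have h2s : (0:ℝ) < Real.sqrt 2 := Real.sqrt_pos.2 (by norm_num)
  set β : ℝ := (2 / Real.sqrt (n-1:ℕ) / Real.sqrt 2) ^ (n-1) with hβdef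
  have hβpos : 0 < β := by rw [hβdef]; positivity
  set C₁ : ℝ := (ω/β) * (4*ω/β)^(n-1) with hC₁def
  have hC₁pos : 0 < C₁ := by rw [hC₁def]; positivity
  have hn0 : (n:ℝ) ≠ 0 := by positivity
  refine ⟨(ω/2) * C₁ ^ (1/(n:ℝ)), by positivity, ?_⟩
  intro K K' hKne hKc hKconv hKsymm hK'ne hK'c hK'conv hK'symm hsub
  have hK'0 : (0 : EuclideanSpace ℝ (Fin n)) ∈ K' := by
    obtain ⟨x, hx⟩ := hK'ne
    have hnx : -x ∈ K' := by rw [hK'symm, Set.mem_neg, neg_neg]; exact hx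
    have h0 := hK'conv hx hnx (by norm_num : (0:ℝ) ≤ 1/2) (by norm_num : (0:ℝ) ≤ 1/2)
      (by norm_num : (1/2 : ℝ) + 1/2 = 1)
    have heq : (1/2 : ℝ) • x + (1/2 : ℝ) • (-x) = 0 := by
      rw [smul_neg]; exact add_neg_cancel _
    rwa [heq] at h0
  have hK0 : (0 : EuclideanSpace ℝ (Fin n)) ∈ K := hsub hK'0
  obtain ⟨x₀, hx₀K, hx₀max⟩ := hKc.exists_isMaxOn hKne continuous_norm.continuousOn
  set R : ℝ := ‖x₀‖ with hRdef
  have hRb : ∀ x ∈ K, ‖x‖ ≤ R := fun x hx => hx₀max hx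
  have hR0 : 0 ≤ R := norm_nonneg _
  have hK'b : ∀ x ∈ K', ‖x‖ ≤ R := fun x hx => hRb x (hsub hx)
  have hcK : Continuous (suppFn K) := Aux32.continuous_suppFn hKne hKc
  have hcK' : Continuous (suppFn K') := Aux32.continuous_suppFn hK'ne hK'c
  have hbK : ∀ u ∈ S, |suppFn K u| ≤ R := by
    intro u hu
    rw [hSdef, mem_sphere_zero_iff_norm] at hu
    exact abs_le.mpr ⟨by linarith [Aux32.suppFn_nonneg (u := u) hKc hK0],
      Aux32.suppFn_le_of_norm_le hKne hRb hu⟩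
  have hbK' : ∀ u ∈ S, |suppFn K' u| ≤ R := by
    intro u hu
    rw [hSdef, mem_sphere_zero_iff_norm] at hu
    exact abs_le.mpr ⟨by linarith [Aux32.suppFn_nonneg (u := u) hK'c hK'0],
      Aux32.suppFn_le_of_norm_le hK'ne hK'b hu⟩
  have hIK : IntegrableOn (suppFn K) S μH[(n:ℝ)-1] := integrableOn_sphere hfin hcK hbK
  have hIK' : IntegrableOn (suppFn K') S μH[(n:ℝ)-1] := integrableOn_sphere hfin hcK' hbK'
  have hIf : IntegrableOn (fun u => suppFn K u - suppFn K' u) S μH[(n:ℝ)-1] := hIK.sub hIK'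
  have hIf2 : IntegrableOn (fun u => (suppFn K u - suppFn K' u)^2) S μH[(n:ℝ)-1] := by
    refine integrableOn_sphere hfin ((hcK.sub hcK').pow 2) (C := (2*R)^2) ?_
    intro u hu
    have h1 := hbK u hu
    have h2 := hbK' u hu
    rw [abs_le] at h1 h2
    rw [abs_le]
    constructor <;> nlinarith
  have hwidth : ∀ (A : Set (EuclideanSpace ℝ (Fin n))), A = -A →
      meanWidth A = 2 * ω⁻¹ * ∫ u in S, suppFn A u ∂μH[(n:ℝ)-1] := by
    intro A hAs
    rw [meanWidth]
    rw [setIntegral_congr_fun hSmeas (g := fun u => 2 * suppFn A u)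
      (fun u _ => by rw [Aux32.suppFn_neg_symm hAs]; ring)]
    rw [integral_const_mul]
    rw [hωdef]
    ring
  have hwK := hwidth K hKsymm
  have hwK' := hwidth K' hK'symm
  have hISK : 0 ≤ ∫ u in S, suppFn K u ∂μH[(n:ℝ)-1] :=
    setIntegral_nonneg hSmeas fun u _ => Aux32.suppFn_nonneg hKc hK0
  have hw0 : 0 ≤ meanWidth K := by
    rw [hwK]; positivity
  have hΔeq : ∫ u in S, (suppFn K u - suppFn K' u) ∂μH[(n:ℝ)-1]
      = (ω/2) * (meanWidth K - meanWidth K') := by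
    rw [integral_sub hIK hIK', hwK, hwK']
    field_simp
  have hf0 : ∀ u ∈ S, 0 ≤ suppFn K u - suppFn K' u := fun u _ =>
    sub_nonneg.mpr (Aux32.suppFn_mono hKc hK'ne hsub)
  have hΔ0 : 0 ≤ meanWidth K - meanWidth K' := by
    have h1 : 0 ≤ ∫ u in S, (suppFn K u - suppFn K' u) ∂μH[(n:ℝ)-1] :=
      setIntegral_nonneg hSmeas hf0
    rw [hΔeq] at h1
    nlinarith
  haveI : Nontrivial (EuclideanSpace ℝ (Fin n)) := by
    refine ⟨EuclideanSpace.single ⟨0, by omega⟩ (1:ℝ), 0, fun h => ?_⟩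
    have h1 := congrArg norm h
    rw [EuclideanSpace.norm_single, norm_zero, norm_one] at h1
    exact one_ne_zero h1
  have hSne : S.Nonempty := NormedSpace.sphere_nonempty.mpr zero_le_one
  have hfcont : Continuous (fun u => suppFn K u - suppFn K' u) := hcK.sub hcK'
  obtain ⟨u₀, hu₀S, hu₀max⟩ := (isCompact_sphere (0 : EuclideanSpace ℝ (Fin n)) 1).exists_isMaxOn
    (by rwa [← hSdef]) hfcont.continuousOn
  set δ : ℝ := suppFn K u₀ - suppFn K' u₀ with hδdef
  have hu₀S' : u₀ ∈ S := by rwa [hSdef]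
  have hfle : ∀ u ∈ S, suppFn K u - suppFn K' u ≤ δ := fun u hu => hu₀max (by rwa [hSdef] at hu)
  have hLHS : (∫ u in S, (suppFn K u - suppFn K' u)^2 ∂μH[(n:ℝ)-1])
      ≤ δ * ((ω/2) * (meanWidth K - meanWidth K')) := by
    calc (∫ u in S, (suppFn K u - suppFn K' u)^2 ∂μH[(n:ℝ)-1])
        ≤ ∫ u in S, δ * (suppFn K u - suppFn K' u) ∂μH[(n:ℝ)-1] := by
          refine setIntegral_mono_on hIf2 (hIf.const_mul δ) hSmeas ?_
          intro u hu
          nlinarith [hfle u hu, hf0 u hu]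
      _ = δ * ∫ u in S, (suppFn K u - suppFn K' u) ∂μH[(n:ℝ)-1] := integral_const_mul δ _
      _ = δ * ((ω/2) * (meanWidth K - meanWidth K')) := by rw [hΔeq]
  rcases le_or_gt δ 0 with hδle | hδpos
  · have hzero : (∫ u in S, (suppFn K u - suppFn K' u)^2 ∂μH[(n:ℝ)-1]) = 0 := by
      rw [setIntegral_congr_fun hSmeas (g := fun _ => (0:ℝ))
        (fun u hu => by
          have h1 := hfle u hu
          have h2 := hf0 u hu
          have h3 : suppFn K u - suppFn K' u = 0 := le_antisymm (h1.trans hδle) h2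
          simp [h3])]
      simp
    rw [hzero]
    have h4 := Real.rpow_nonneg hw0 (1 - 1/(n:ℝ))
    have h5 := Real.rpow_nonneg hΔ0 (1 + 1/(n:ℝ))
    positivity
  · have hu₀norm : ‖u₀‖ = 1 := mem_sphere_zero_iff_norm.mp hu₀S
    have hδR : δ ≤ R := by
      have h1 : 0 ≤ suppFn K' u₀ := Aux32.suppFn_nonneg hK'c hK'0
      have h2 : suppFn K u₀ ≤ R := Aux32.suppFn_le_of_norm_le hKne hRb hu₀norm
      rw [hδdef]; linarith
    have hRpos : 0 < R := hδpos.trans_le hδR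
    set ρ : ℝ := δ/(4*R) with hρdef
    have hρ0 : 0 < ρ := by rw [hρdef]; exact div_pos hδpos (by positivity)
    have hρ1 : ρ ≤ 1 := by
      rw [hρdef, div_le_one (by positivity)]
      linarith
    set cap := S ∩ Metric.closedBall u₀ ρ with hcapdef
    have hcapmeas : MeasurableSet cap := hSmeas.inter measurableSet_closedBall
    have hcapfin : μH[(n:ℝ)-1] cap ≠ ⊤ :=
      ((measure_mono Set.inter_subset_left).trans_lt hfin).ne
    have hcaplow : ENNReal.ofReal (β * ρ^(n-1)) ≤ μH[(n:ℝ)-1] cap := by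
      rw [hβdef, hcapdef, hSdef]
      exact cap_lower hn hu₀norm hρ0 hρ1
    have hcapT : β * ρ^(n-1) ≤ (μH[(n:ℝ)-1] cap).toReal :=
      (ENNReal.ofReal_le_iff_le_toReal hcapfin).1 hcaplow
    have hpoint : ∀ u ∈ cap, δ/2 ≤ suppFn K u - suppFn K' u := by
      rintro u ⟨huS, hub⟩
      rw [Metric.mem_closedBall, dist_eq_norm] at hub
      have h1 : suppFn K u₀ - suppFn K u ≤ R * ‖u₀ - u‖ :=
        Aux32.suppFn_sub_le hKne hKc hRb u₀ u
      have h2 : suppFn K' u - suppFn K' u₀ ≤ R * ‖u - u₀‖ :=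
        Aux32.suppFn_sub_le hK'ne hK'c hK'b u u₀
      have h3 : ‖u₀ - u‖ = ‖u - u₀‖ := norm_sub_rev _ _
      have h4 : R * ‖u - u₀‖ ≤ R * ρ := mul_le_mul_of_nonneg_left hub hR0
      have h5 : R * ρ = δ/4 := by rw [hρdef]; field_simp
      rw [h3] at h1
      linarith
    have hIcap : (δ/2) * (μH[(n:ℝ)-1] cap).toReal
        ≤ ∫ u in cap, (suppFn K u - suppFn K' u) ∂μH[(n:ℝ)-1] :=
      by have := setIntegral_ge_of_const_le_real hcapmeas hcapfin hpoint (hIf.mono_set Set.inter_subset_left)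
         simpa [Measure.real, smul_eq_mul, mul_comm] using this
    have hIcapS : (∫ u in cap, (suppFn K u - suppFn K' u) ∂μH[(n:ℝ)-1])
        ≤ ∫ u in S, (suppFn K u - suppFn K' u) ∂μH[(n:ℝ)-1] := by
      refine setIntegral_mono_set hIf ?_ (HasSubset.Subset.eventuallyLE Set.inter_subset_left)
      exact (ae_restrict_iff' hSmeas).2 (ae_of_all _ hf0)
    have hkey : (δ/2) * (β * ρ^(n-1)) ≤ (ω/2) * (meanWidth K - meanWidth K') := by
      have h1 : (δ/2) * (β * ρ^(n-1)) ≤ (δ/2) * (μH[(n:ℝ)-1] cap).toReal :=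
        mul_le_mul_of_nonneg_left hcapT (half_pos hδpos).le
      have h2 := (h1.trans hIcap).trans hIcapS
      rwa [hΔeq] at h2
    have hmx₀ : -x₀ ∈ K := by rw [hKsymm, Set.mem_neg, neg_neg]; exact hx₀K
    have habs_le : ∀ u ∈ S, |⟪u, x₀⟫| ≤ suppFn K u := by
      intro u _
      refine abs_le.mpr ⟨?_, Aux32.inner_le_suppFn hKc hx₀K u⟩
      have h1 := Aux32.inner_le_suppFn hKc hmx₀ u
      rw [inner_neg_right] at h1
      linarith
    have hIntAbs : IntegrableOn (fun u => |⟪u, x₀⟫|) S μH[(n:ℝ)-1] := by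
      refine integrableOn_sphere hfin ((continuous_id.inner continuous_const).abs) (C := ‖x₀‖) ?_
      intro u hu
      rw [mem_sphere_zero_iff_norm] at hu
      simp only [abs_abs]
      calc |⟪u, x₀⟫| ≤ ‖u‖ * ‖x₀‖ := abs_real_inner_le_norm u x₀
        _ = ‖x₀‖ := by rw [hu, one_mul]
    have hseg : R * (β/2) ≤ ∫ u in S, |⟪u, x₀⟫| ∂μH[(n:ℝ)-1] := by
      have h6 := abs_inner_integral_ge hn x₀
      rw [← hSdef] at h6
      calc R * (β/2) = ‖x₀‖ * ((2 / Real.sqrt (n-1:ℕ) / Real.sqrt 2) ^ (n-1) / 2) := by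
            rw [hRdef, hβdef]
        _ ≤ _ := h6
    have hIhK : R * (β/2) ≤ ∫ u in S, suppFn K u ∂μH[(n:ℝ)-1] :=
      hseg.trans (setIntegral_mono_on hIntAbs hIK hSmeas habs_le)
    have hwpos : 0 < meanWidth K := by
      rw [hwK]
      have h1 : 0 < ∫ u in S, suppFn K u ∂μH[(n:ℝ)-1] :=
        lt_of_lt_of_le (by positivity) hIhK
      positivity
    have hRw : R ≤ ω * meanWidth K / β := by
      rw [hwK]
      have h2 : ω * (2 * ω⁻¹ * ∫ u in S, suppFn K u ∂μH[(n:ℝ)-1]) / β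
          = 2 * (∫ u in S, suppFn K u ∂μH[(n:ℝ)-1]) / β := by
        field_simp
      rw [h2, le_div_iff₀ hβpos]
      linarith
    have hΔpos : 0 < meanWidth K - meanWidth K' := by
      have h1 : 0 < (δ/2) * (β * ρ^(n-1)) :=
        mul_pos (half_pos hδpos) (mul_pos hβpos (pow_pos hρ0 _))
      nlinarith [h1.trans_le hkey, hωpos]
    have hnn : n - 1 + 1 = n := by omega
    have hδpow : δ^n = δ^(n-1) * δ := by
      have h := pow_succ δ (n-1)
      rw [hnn] at h
      exact h
    have h4R : (0:ℝ) < (4*R)^(n-1) := by positivity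
    have hρpow : ρ^(n-1) = δ^(n-1)/(4*R)^(n-1) := by rw [hρdef, div_pow]
    have hkey2 : β * δ^n ≤ ω * (meanWidth K - meanWidth K') * (4*R)^(n-1) := by
      rw [hρpow] at hkey
      have h1 := mul_le_mul_of_nonneg_right hkey h4R.le
      have h2 : ((δ/2) * (β * (δ^(n-1)/(4*R)^(n-1)))) * (4*R)^(n-1)
          = β * (δ^(n-1) * δ) / 2 := by field_simp
      rw [h2] at h1
      rw [hδpow]
      calc β * (δ^(n-1) * δ) = 2 * (β * (δ^(n-1) * δ) / 2) := by ring
        _ ≤ 2 * (ω / 2 * (meanWidth K - meanWidth K') * (4*R)^(n-1)) := by linarith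
        _ = ω * (meanWidth K - meanWidth K') * (4*R)^(n-1) := by ring
    have h4Rle : (4*R)^(n-1) ≤ (4*(ω * meanWidth K / β))^(n-1) := by
      refine pow_le_pow_left₀ (by positivity) (by linarith) _
    have hkey3 : β * δ^n ≤ ω * (meanWidth K - meanWidth K')
        * (4*(ω * meanWidth K / β))^(n-1) :=
      hkey2.trans (mul_le_mul_of_nonneg_left h4Rle (by positivity))
    have hexp : ω * (meanWidth K - meanWidth K') * (4*(ω * meanWidth K / β))^(n-1)
        = (C₁ * (meanWidth K - meanWidth K') * (meanWidth K)^(n-1)) * β := by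
      rw [hC₁def]
      field_simp
      ring
    have hδn : δ^n ≤ C₁ * (meanWidth K - meanWidth K') * (meanWidth K)^(n-1) := by
      rw [hexp] at hkey3
      rw [mul_comm β (δ^n)] at hkey3
      exact le_of_mul_le_mul_right hkey3 hβpos
    have hδrpow : δ ≤ C₁^(1/(n:ℝ)) * (meanWidth K - meanWidth K')^(1/(n:ℝ))
        * (meanWidth K)^(1 - 1/(n:ℝ)) := by
      have h1 : δ = ((δ^n : ℝ)) ^ (1/(n:ℝ)) := by
        rw [← Real.rpow_natCast δ n, ← Real.rpow_mul hδpos.le, mul_one_div,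
          div_self hn0, Real.rpow_one]
      have h2 : ((δ^n : ℝ)) ^ (1/(n:ℝ))
          ≤ (C₁ * (meanWidth K - meanWidth K') * (meanWidth K)^(n-1)) ^ (1/(n:ℝ)) :=
        Real.rpow_le_rpow (by positivity) hδn (by positivity)
      have h3 : (C₁ * (meanWidth K - meanWidth K') * (meanWidth K)^(n-1)) ^ (1/(n:ℝ))
          = C₁^(1/(n:ℝ)) * (meanWidth K - meanWidth K')^(1/(n:ℝ))
            * ((meanWidth K)^(n-1 : ℕ))^(1/(n:ℝ)) := by
        rw [Real.mul_rpow (by positivity) (by positivity),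
          Real.mul_rpow hC₁pos.le hΔpos.le]
      have h4 : ((meanWidth K)^(n-1 : ℕ))^(1/(n:ℝ)) = (meanWidth K)^(1 - 1/(n:ℝ)) := by
        rw [← Real.rpow_natCast (meanWidth K) (n-1), ← Real.rpow_mul hw0]
        congr 1
        have hc : ((n-1 : ℕ) : ℝ) = (n:ℝ) - 1 := by
          have h5 : (1:ℕ) ≤ n := by omega
          push_cast [Nat.cast_sub h5]
          ring
        rw [hc]
        field_simp
      rw [h1]
      rw [h3, h4] at h2
      exact h2
    have hΔcomb : (meanWidth K - meanWidth K')^(1/(n:ℝ)) * (meanWidth K - meanWidth K')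
        = (meanWidth K - meanWidth K')^(1 + 1/(n:ℝ)) := by
      rw [show (1 + 1/(n:ℝ)) = 1/(n:ℝ) + 1 by ring, Real.rpow_add hΔpos, Real.rpow_one]
    calc (∫ u in S, (suppFn K u - suppFn K' u)^2 ∂μH[(n:ℝ)-1])
        ≤ δ * ((ω/2) * (meanWidth K - meanWidth K')) := hLHS
      _ ≤ (C₁^(1/(n:ℝ)) * (meanWidth K - meanWidth K')^(1/(n:ℝ))
            * (meanWidth K)^(1 - 1/(n:ℝ))) * ((ω/2) * (meanWidth K - meanWidth K')) := by
          refine mul_le_mul_of_nonneg_right hδrpow (by positivity)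
      _ = ((ω/2) * C₁^(1/(n:ℝ))) * (meanWidth K)^(1 - 1/(n:ℝ))
            * ((meanWidth K - meanWidth K')^(1/(n:ℝ)) * (meanWidth K - meanWidth K')) := by
          ring
      _ = ((ω/2) * C₁^(1/(n:ℝ))) * (meanWidth K)^(1 - 1/(n:ℝ))
            * (meanWidth K - meanWidth K')^(1 + 1/(n:ℝ)) := by rw [hΔcomb]
end
end

section
/- Let K ⊂ ℝ² be a convex body with nonempty interior. Then the set (1/2)•∂K (the frontier of K scaled by the factor 1/2 about the origin) is a weak barrier for K: for every unit vector u ∈ S¹, ∫_{u^⊥} #(((1/2)•∂K) ∩ g_{x,u}) dH¹(x) ≥ H¹(K|u^⊥). (The example from the introduction of a weak barrier that need not be a barrier.) -/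
open MeasureTheory Set Pointwise
open scoped RealInnerProductSpace ENNReal NNReal

noncomputable section

lemma two_bdry {E : Type*} [NormedAddCommGroup E] [NormedSpace ℝ E]
    (K' : Set E) (hc : IsCompact K') (x y u : E) (hu : u ≠ 0)
    (hy : y ∈ interior K') (hyl : ∃ t : ℝ, y = x + t • u) :
    ∃ a b, a ≠ b ∧ a ∈ frontier K' ∧ b ∈ frontier K' ∧
      (∃ t : ℝ, a = x + t • u) ∧ (∃ t : ℝ, b = x + t • u) := by
  obtain ⟨s₀, rfl⟩ := hyl
  set f : ℝ → E := fun s => x + s • u with hf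
  have hfc : Continuous f := by continuity
  set T : Set ℝ := f ⁻¹' K' with hT
  have hTc : IsClosed T := hc.isClosed.preimage hfc
  set U : Set ℝ := f ⁻¹' (interior K') with hU
  have hUo : IsOpen U := isOpen_interior.preimage hfc
  have hs₀U : s₀ ∈ U := hy
  have hUT : U ⊆ T := preimage_mono interior_subset
  have hb : ∀ (c δ s : ℝ), |s - c| < δ → s ∈ Metric.ball c δ := fun c δ s h => by
    simpa [Real.dist_eq] using h
  obtain ⟨R, hR⟩ := (isBounded_iff_forall_norm_le).1 hc.isBounded
  have hTb : ∀ s ∈ T, |s| ≤ (R + ‖x‖) / ‖u‖ := by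
    intro s hs
    have h1 : ‖f s‖ ≤ R := hR _ hs
    have h2 : ‖s • u‖ ≤ ‖f s‖ + ‖x‖ := by
      have : s • u = f s - x := by simp [hf]
      rw [this]; exact norm_sub_le _ _
    rw [norm_smul, Real.norm_eq_abs] at h2
    rw [div_eq_inv_mul, ← inv_mul_cancel_left₀ (norm_ne_zero_iff.2 hu) |s|, mul_comm ‖u‖]
    gcongr
    linarith
  have hTne : T.Nonempty := ⟨s₀, hUT hs₀U⟩
  have hbdd : BddAbove T ∧ BddBelow T := by
    constructor
    · exact ⟨(R + ‖x‖) / ‖u‖, fun s hs => (abs_le.1 (hTb s hs)).2⟩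
    · exact ⟨-((R + ‖x‖) / ‖u‖), fun s hs => (abs_le.1 (hTb s hs)).1⟩
  set t₁ := sInf T
  set t₂ := sSup T
  have ht₁T : t₁ ∈ T := hTc.csInf_mem hTne hbdd.2
  have ht₂T : t₂ ∈ T := hTc.csSup_mem hTne hbdd.1
  obtain ⟨ε, hε, hball⟩ := Metric.isOpen_iff.1 hUo s₀ hs₀U
  have h1 : s₀ - ε/2 ∈ T := hUT (hball (hb _ _ _ (by rw [abs_lt]; constructor <;> linarith)))
  have h2 : s₀ + ε/2 ∈ T := hUT (hball (hb _ _ _ (by rw [abs_lt]; constructor <;> linarith)))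
  have ht12 : t₁ < t₂ :=
    lt_of_le_of_lt (csInf_le hbdd.2 h1) (lt_of_lt_of_le (by linarith) (le_csSup hbdd.1 h2))
  have hfr : ∀ t ∈ T, (t = t₁ ∨ t = t₂) → f t ∈ frontier K' := by
    intro t ht htt
    rw [frontier, mem_diff]
    refine ⟨subset_closure ht, fun hint => ?_⟩
    have htU : t ∈ U := hint
    obtain ⟨δ, hδ, hballδ⟩ := Metric.isOpen_iff.1 hUo t htU
    rcases htt with rfl | rfl
    · have : t₁ - δ/2 ∈ T := hUT (hballδ (hb _ _ _ (by rw [abs_lt]; constructor <;> linarith)))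
      have := csInf_le hbdd.2 this
      linarith
    · have : t₂ + δ/2 ∈ T := hUT (hballδ (hb _ _ _ (by rw [abs_lt]; constructor <;> linarith)))
      have := le_csSup hbdd.1 this
      linarith
  refine ⟨f t₁, f t₂, ?_, hfr _ ht₁T (Or.inl rfl), hfr _ ht₂T (Or.inr rfl), ⟨t₁, rfl⟩, ⟨t₂, rfl⟩⟩
  intro h
  have : (t₁ - t₂) • u = 0 := by
    have := add_left_cancel (h : x + t₁ • u = x + t₂ • u)
    rw [sub_smul, this, sub_self]
  rcases smul_eq_zero.1 this with h' | h'
  · exact absurd (sub_eq_zero.1 h') (ne_of_lt ht12)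
  · exact hu h'

/-- The introduction's example: for a planar convex body `K` with nonempty interior, the
half-scaled boundary `½•∂K` is a weak barrier for `K`. -/
theorem stmt_15 (K : Set (EuclideanSpace ℝ (Fin 2)))
    (hKne : K.Nonempty) (hKcomp : IsCompact K) (hKconv : Convex ℝ K)
    (hKint : (interior K).Nonempty) :
    ∀ u : EuclideanSpace ℝ (Fin 2), ‖u‖ = 1 →
      μH[(1 : ℝ)] (projPerp u K) ≤
        ∫⁻ x in {x : EuclideanSpace ℝ (Fin 2) | ⟪x, u⟫ = 0},
          (((((2 : ℝ)⁻¹ • frontier K) ∩ lineThrough x u).encard : ℝ≥0∞)) ∂μH[(1 : ℝ)] := by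
  intro u hu
  have hu0 : u ≠ 0 := by intro h; rw [h, norm_zero] at hu; norm_num at hu
  set v : EuclideanSpace ℝ (Fin 2) := (WithLp.equiv 2 (Fin 2 → ℝ)).symm ![-(u 1), u 0] with hv
  have hv0 : v 0 = -(u 1) := rfl
  have hv1 : v 1 = u 0 := rfl
  have hsum : u 0 * u 0 + u 1 * u 1 = 1 := by
    have h := real_inner_self_eq_norm_sq u
    rw [hu] at h
    simp only [PiLp.inner_apply, RCLike.inner_apply, Fin.sum_univ_two, conj_trivial, one_pow] at h
    linarith
  have hvu : ⟪v, u⟫ = 0 := by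
    simp [PiLp.inner_apply, RCLike.inner_apply, Fin.sum_univ_two, hv0, hv1]; ring
  have hvv : ⟪v, v⟫ = 1 := by
    simp only [PiLp.inner_apply, RCLike.inner_apply, Fin.sum_univ_two, conj_trivial, hv0, hv1]; linarith
  have hnv : ‖v‖ = 1 := by
    have h2 : ‖v‖ ^ 2 = 1 := by rw [← real_inner_self_eq_norm_sq]; exact hvv
    nlinarith [norm_nonneg v]
  have hdec : ∀ y : EuclideanSpace ℝ (Fin 2), y = ⟪y, u⟫ • u + ⟪y, v⟫ • v := by
    intro y
    refine PiLp.ext fun i => ?_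
    fin_cases i <;>
      simp only [PiLp.inner_apply, RCLike.inner_apply, Fin.sum_univ_two, hv0, hv1,
        PiLp.add_apply, PiLp.smul_apply, smul_eq_mul, conj_trivial, Fin.mk_zero, Fin.mk_one]
    · linear_combination (-(y 0)) * hsum
    · linear_combination (-(y 1)) * hsum
  have hproj : ∀ y : EuclideanSpace ℝ (Fin 2), y - ⟪y, u⟫ • u = ⟪v, y⟫ • v := by
    intro y
    rw [real_inner_comm y v]
    exact sub_eq_of_eq_add' (hdec y)
  set K' : Set (EuclideanSpace ℝ (Fin 2)) := (2:ℝ)⁻¹ • K with hK'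
  have h2 : ((2:ℝ)⁻¹) ≠ 0 := by norm_num
  have hK'comp : IsCompact K' := IsCompact.smul _ hKcomp
  have hK'conv : Convex ℝ K' := hKconv.smul _
  have hK'int : (interior K').Nonempty := by
    rw [hK', interior_smul₀ h2]; exact hKint.smul_set
  have hfr : frontier K' = (2:ℝ)⁻¹ • frontier K := by
    rw [hK', frontier, frontier, closure_smul₀, interior_smul₀ h2, smul_set_sdiff₀ h2]
  set g : EuclideanSpace ℝ (Fin 2) → ℝ := fun y => ⟪v, y⟫ with hg
  have hvsum : v 0 * v 0 + v 1 * v 1 = 1 := by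
    rw [hv0, hv1]; linear_combination hsum
  have hglin : IsLinearMap ℝ g := ⟨fun a b => inner_add_right v a b, fun c a => real_inner_smul_right v a c⟩
  have hgtv : ∀ t : ℝ, g (t • v) = t := by
    intro t
    show ⟪v, t • v⟫ = t
    rw [real_inner_smul_right, hvv, mul_one]
  have hgc : Continuous g := Continuous.inner continuous_const continuous_id
  have hgsurj : Function.Surjective g := fun r => ⟨r • v, hgtv r⟩
  set J : Set ℝ := g '' K with hJ
  set J' : Set ℝ := g '' (interior K') with hJ'
  have hJ'open : IsOpen J' := by
    have : g = ⇑(innerSL ℝ v) := rfl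
    rw [hJ', this]
    exact (innerSL ℝ v).isOpenMap (this ▸ hgsurj) _ isOpen_interior
  have hJ'conv : Convex ℝ J' := (hK'conv.interior).is_linear_image hglin
  set L : Set (EuclideanSpace ℝ (Fin 2)) := {x : EuclideanSpace ℝ (Fin 2) | ⟪x, u⟫ = 0} with hL
  set S : Set (EuclideanSpace ℝ (Fin 2)) := (fun t : ℝ => t • v) '' J' with hS
  have hnnv : ‖v‖₊ = 1 := by ext; simp [hnv]
  have hSL : S ⊆ L := by
    rintro _ ⟨t, _, rfl⟩
    show ⟪t • v, u⟫ = 0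
    rw [real_inner_smul_left, hvu, mul_zero]
  have hSeq : S = L ∩ g ⁻¹' J' := by
    ext x
    constructor
    · rintro ⟨t, ht, rfl⟩
      refine ⟨hSL ⟨t, ht, rfl⟩, ?_⟩
      show g (t • v) ∈ J'
      rw [hgtv t]; exact ht
    · rintro ⟨hxL, hxJ⟩
      refine ⟨g x, hxJ, ?_⟩
      have hx0 : ⟪x, u⟫ = 0 := hxL
      have hthis := hdec x
      rw [hx0, zero_smul, zero_add] at hthis
      show (⟪v, x⟫ : ℝ) • v = x
      rw [real_inner_comm x v]
      exact hthis.symm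
  have hLmeas : MeasurableSet L :=
    (isClosed_eq (Continuous.inner continuous_id continuous_const) continuous_const).measurableSet
  have hSmeas : MeasurableSet S := by
    rw [hSeq]; exact hLmeas.inter ((hJ'open.preimage hgc).measurableSet)
  -- pointwise bound
  have key : ∀ x ∈ S, (2:ℝ≥0∞) ≤ ((((2 : ℝ)⁻¹ • frontier K) ∩ lineThrough x u).encard : ℝ≥0∞) := by
    rintro _ ⟨t, ⟨y, hy, hgy⟩, rfl⟩
    have hyline : ∃ s : ℝ, y = t • v + s • u := by
      refine ⟨⟪y, u⟫, ?_⟩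
      conv_lhs => rw [hdec y]
      have hgy' : (⟪y, v⟫ : ℝ) = t := (real_inner_comm v y).trans hgy
      rw [hgy', add_comm]
    obtain ⟨a, b, hab, haf, hbf, hal, hbl⟩ := two_bdry K' hK'comp (t • v) y u hu0 hy hyline
    have hsub : ({a, b} : Set (EuclideanSpace ℝ (Fin 2))) ⊆
        ((2 : ℝ)⁻¹ • frontier K) ∩ lineThrough (t • v) u := by
      rw [← hfr]
      rintro z (rfl | rfl)
      · exact ⟨haf, hal⟩
      · exact ⟨hbf, hbl⟩
    have hcard := Set.encard_le_encard hsub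
    rw [Set.encard_pair hab] at hcard
    exact_mod_cast hcard
  -- measure identities
  have hLHS : μH[(1:ℝ)] (projPerp u K) = volume J := by
    have himg : projPerp u K = (fun t : ℝ => t • v) '' J := by
      rw [projPerp, hJ, image_image]
      exact image_congr fun y _ => hproj y
    rw [himg, hausdorffMeasure_smul_right_image v J, hnnv, one_smul, hausdorffMeasure_real]
  have hSmeasure : μH[(1:ℝ)] S = volume J' := by
    rw [hS, hausdorffMeasure_smul_right_image v J', hnnv, one_smul, hausdorffMeasure_real]
  have hvolJ : volume J ≤ 2 * volume J' := by
    have h1 : g '' K' ⊆ closure J' := by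
      rintro _ ⟨y, hy, rfl⟩
      have hyc : y ∈ closure (interior K') := by
        obtain ⟨w, hw⟩ := hK'int
        have hseg := hK'conv.openSegment_self_interior_subset_interior hy hw
        exact closure_mono hseg (segment_subset_closure_openSegment (left_mem_segment ℝ y w))
      exact (image_closure_subset_closure_image hgc) (mem_image_of_mem g hyc)
    have h2' : g '' K' = (2:ℝ)⁻¹ • J := by
      rw [hK', hJ, ← Set.image_smul, ← Set.image_smul, image_image, image_image]
      exact image_congr fun y _ => by show (⟪v, (2:ℝ)⁻¹ • y⟫) = (2:ℝ)⁻¹ • (⟪v, y⟫); rw [real_inner_smul_right]; rfl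
    have h3 : volume (closure J') ≤ volume J' := by
      have hfr0 : volume (frontier J') = 0 := hJ'conv.addHaar_frontier volume
      calc volume (closure J') ≤ volume (J' ∪ frontier J') := measure_mono (fun x hx => by
              by_cases h : x ∈ J'
              · exact Or.inl h
              · exact Or.inr ⟨hx, by rwa [hJ'open.interior_eq]⟩)
        _ ≤ volume J' + volume (frontier J') := measure_union_le _ _
        _ = volume J' := by rw [hfr0, add_zero]
    have h4 : volume ((2:ℝ)⁻¹ • J) ≤ volume J' := h2' ▸ ((measure_mono h1).trans h3)
    have h5 : volume ((2:ℝ)⁻¹ • J) = ENNReal.ofReal |((2:ℝ)⁻¹) ^ (Module.finrank ℝ ℝ)| * volume J :=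
      Measure.addHaar_smul volume _ J
    have h6 : ENNReal.ofReal |((2:ℝ)⁻¹) ^ (Module.finrank ℝ ℝ)| = 2⁻¹ := by
      rw [Module.finrank_self, pow_one, abs_of_pos (by norm_num : (0:ℝ) < 2⁻¹)]
      rw [ENNReal.ofReal_inv_of_pos (by norm_num : (0:ℝ) < 2), ENNReal.ofReal_ofNat]
    rw [h5, h6] at h4
    calc volume J = 2 * (2⁻¹ * volume J) := by
            rw [← mul_assoc, ENNReal.mul_inv_cancel (by norm_num) (by norm_num), one_mul]
      _ ≤ 2 * volume J' := by exact mul_le_mul_right h4 2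
  calc μH[(1:ℝ)] (projPerp u K) = volume J := hLHS
    _ ≤ 2 * volume J' := hvolJ
    _ = 2 * μH[(1:ℝ)] S := by rw [hSmeasure]
    _ = ∫⁻ x in L, S.indicator (fun _ => (2:ℝ≥0∞)) x ∂μH[(1:ℝ)] := by
        rw [lintegral_indicator hSmeas, setLIntegral_const, Measure.restrict_apply hSmeas,
          inter_eq_self_of_subset_left hSL]
    _ ≤ _ := lintegral_mono fun x => by
        by_cases hx : x ∈ S
        · rw [indicator_of_mem hx]; exact key x hx
        · rw [indicator_of_notMem hx]; exact zero_le
end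
end

section
/- Let v₁, …, v_m ∈ ℝ² be vectors whose real linear span is all of ℝ². Then the perimeter of the zonotope Z = ∑_{i=1}^m [0, v_i] (Minkowski sum of the segments [0, v_i]) equals twice the total length of the generating segments: H¹(∂Z) = 2·∑_{i=1}^m ‖v_i‖. (This is the identity |∂(co(B))| = 2|B| for a planar straight weak barrier B used in the proof of Proposition 1.1.) -/
open MeasureTheory Set Pointwise
open scoped RealInnerProductSpace ENNReal NNReal

noncomputable section

namespace Z16

abbrev E2 := EuclideanSpace ℝ (Fin 2)

def cross (a b : E2) : ℝ := a 0 * b 1 - a 1 * b 0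

def perp (a : E2) : E2 := !₂[-(a 1), a 0]

def nsq (a : E2) : ℝ := a 0 ^ 2 + a 1 ^ 2

@[simp] lemma add_apply (a b : E2) (i : Fin 2) : (a + b) i = a i + b i := rfl
@[simp] lemma smul_apply (t : ℝ) (a : E2) (i : Fin 2) : (t • a) i = t * a i := rfl
@[simp] lemma neg_apply (a : E2) (i : Fin 2) : (-a) i = -(a i) := rfl
@[simp] lemma zero_apply (i : Fin 2) : (0 : E2) i = 0 := rfl
@[simp] lemma perp_apply0 (a : E2) : perp a 0 = -(a 1) := rfl
@[simp] lemma perp_apply1 (a : E2) : perp a 1 = a 0 := rfl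

lemma ext2 {a b : E2} (h0 : a 0 = b 0) (h1 : a 1 = b 1) : a = b := by
  ext i
  fin_cases i <;> assumption

lemma ne_zero_iff {a : E2} : a ≠ 0 ↔ a 0 ≠ 0 ∨ a 1 ≠ 0 := by
  constructor
  · intro h
    by_contra hc
    push_neg at hc
    exact h (ext2 hc.1 hc.2)
  · rintro (h | h) hc <;> rw [hc] at h <;> simp at h

lemma nsq_pos {a : E2} (ha : a ≠ 0) : 0 < nsq a := by
  simp only [nsq]
  rcases ne_zero_iff.1 ha with h | h <;> positivity

@[simp] lemma cross_self (a : E2) : cross a a = 0 := by simp [cross]; ring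
@[simp] lemma cross_zero_right (a : E2) : cross a 0 = 0 := by simp [cross]
@[simp] lemma cross_zero_left (a : E2) : cross 0 a = 0 := by simp [cross]
lemma cross_smul_right (a : E2) (t : ℝ) (b : E2) : cross a (t • b) = t * cross a b := by
  simp [cross]; ring
lemma cross_smul_left (t : ℝ) (a b : E2) : cross (t • a) b = t * cross a b := by
  simp [cross]; ring
lemma cross_add_left (a b c : E2) : cross (a + b) c = cross a c + cross b c := by
  simp [cross]; ring
lemma cross_add_right (a b c : E2) : cross a (b + c) = cross a b + cross a c := by
  simp [cross]; ring
@[simp] lemma cross_neg_left (a b : E2) : cross (-a) b = -cross a b := by simp [cross]; ring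
lemma cross_perp_self (a : E2) : cross a (perp a) = nsq a := by simp [cross, nsq]; ring

/-- Fundamental 2D expansion identity. -/
lemma expand (a b x : E2) : cross a b • x = cross x b • a + cross a x • b := by
  apply ext2 <;> simp [cross] <;> ring

lemma exists_lam {a b : E2} (ha : a ≠ 0) (h : cross a b = 0) : ∃ l : ℝ, b = l • a := by
  have h1 := expand a (perp a) b
  rw [cross_perp_self, h] at h1
  -- nsq a • b = cross b (perp a) • a + 0 • perp a
  refine ⟨cross b (perp a) / nsq a, ?_⟩
  have h2 : nsq a ≠ 0 := (nsq_pos ha).ne'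
  have h3 : nsq a • b = cross b (perp a) • a := by rw [h1]; simp
  have h4 : (nsq a)⁻¹ • (nsq a • b) = (nsq a)⁻¹ • (cross b (perp a) • a) := by rw [h3]
  rw [smul_smul, inv_mul_cancel₀ h2, one_smul, smul_smul] at h4
  conv_lhs => rw [h4]
  rw [div_eq_inv_mul]


section SumSeg
variable {ι : Type*} [DecidableEq ι]

lemma mem_segment_zero {w x : E2} :
    x ∈ segment ℝ 0 w ↔ ∃ t : ℝ, t ∈ Icc (0:ℝ) 1 ∧ x = t • w := by
  rw [segment_eq_image]
  constructor
  · rintro ⟨t, ht, rfl⟩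
    exact ⟨t, ht, by simp⟩
  · rintro ⟨t, ht, rfl⟩
    exact ⟨t, ht, by simp⟩

/-- Membership in a finite Minkowski sum of segments from the origin. -/
lemma mem_sum_segment (s : Finset ι) (g : ι → E2) (x : E2) :
    x ∈ ∑ i ∈ s, segment ℝ 0 (g i) ↔
      ∃ t : ι → ℝ, (∀ i, t i ∈ Icc (0:ℝ) 1) ∧ x = ∑ i ∈ s, t i • g i := by
  induction s using Finset.induction generalizing x with
  | empty =>
    simp only [Finset.sum_empty]
    constructor
    · intro hx
      refine ⟨fun _ => 0, fun _ => ⟨le_refl 0, zero_le_one⟩, ?_⟩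
      simpa using hx
    · rintro ⟨t, ht, rfl⟩
      simp [Set.mem_zero]
  | @insert a s ha ih =>
    simp only [Finset.sum_insert ha]
    constructor
    · intro hx
      rcases Set.mem_add.1 hx with ⟨y, hy, z, hz, rfl⟩
      rcases mem_segment_zero.1 hy with ⟨ta, hta, rfl⟩
      rcases (ih z).1 hz with ⟨t, ht, rfl⟩
      refine ⟨Function.update t a ta, ?_, ?_⟩
      · intro i
        rcases eq_or_ne i a with rfl | hia
        · simpa using hta
        · simpa [Function.update_of_ne hia] using ht i
      · rw [Function.update_self]
        congr 1
        exact Finset.sum_congr rfl fun i hi => by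
          rw [Function.update_of_ne (fun h => ha (by rwa [h] at hi))]
    · rintro ⟨t, ht, rfl⟩
      exact Set.mem_add.2 ⟨t a • g a, mem_segment_zero.2 ⟨t a, ht a, rfl⟩,
        ∑ i ∈ s, t i • g i, (ih _).2 ⟨t, ht, rfl⟩, rfl⟩

lemma convex_sum_segment (s : Finset ι) (g : ι → E2) :
    Convex ℝ (∑ i ∈ s, segment ℝ 0 (g i)) := by
  classical
  refine Finset.sum_induction _ _ (fun A B hA hB => hA.add hB) ?_ ?_
  · rw [show (0 : Set E2) = {0} from rfl]
    exact convex_singleton 0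
  · exact fun i _ => convex_segment 0 (g i)

lemma isCompact_sum_segment (s : Finset ι) (g : ι → E2) :
    IsCompact (∑ i ∈ s, segment ℝ 0 (g i)) := by
  classical
  refine Finset.sum_induction _ _ (fun A B hA hB => hA.add hB) ?_ ?_
  · rw [show (0 : Set E2) = {0} from rfl]
    exact isCompact_singleton
  · intro i _
    rw [segment_eq_image]
    exact (isCompact_Icc).image (by continuity)

/-- image of an interval under `t ↦ t • w` as a segment sum building block -/
lemma seg_smul (l : ℝ) (w : E2) :
    segment ℝ 0 (l • w) = (fun t : ℝ => t • w) '' Icc (min l 0) (max l 0) := by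
  ext x
  rw [mem_segment_zero]
  constructor
  · rintro ⟨t, ⟨ht0, ht1⟩, rfl⟩
    refine ⟨t * l, ⟨?_, ?_⟩, by rw [smul_smul]⟩
    · rcases le_total 0 l with h | h
      · exact le_trans (min_le_right _ _) (by positivity)
      · exact le_trans (min_le_left _ _) (by nlinarith)
    · rcases le_total 0 l with h | h
      · exact le_trans (by nlinarith) (le_max_left _ _)
      · exact le_trans (by nlinarith) (le_max_right _ _)
  · rintro ⟨t, ⟨ht0, ht1⟩, rfl⟩
    rcases eq_or_ne l 0 with rfl | hl
    · simp only [min_self, max_self] at *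
      have : t = 0 := le_antisymm (by simpa using ht1) (by simpa using ht0)
      exact ⟨0, ⟨le_refl 0, zero_le_one⟩, by simp [this]⟩
    · refine ⟨t / l, ⟨?_, ?_⟩, by rw [smul_smul, div_mul_cancel₀ _ hl]⟩
      · rcases hl.lt_or_gt with h | h
        · rw [min_eq_left h.le] at ht0
          rw [max_eq_right h.le] at ht1
          exact div_nonneg_iff.2 (Or.inr ⟨ht1, h.le⟩)
        · rw [min_eq_right h.le] at ht0
          exact div_nonneg ht0 h.le
      · rcases hl.lt_or_gt with h | h
        · rw [min_eq_left h.le] at ht0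
          exact div_le_one_iff.2 (Or.inr (Or.inr ⟨h, ht0⟩))
        · rw [max_eq_left h.le] at ht1
          exact (div_le_one h).2 ht1

lemma image_smul_add (w : E2) (A B : Set ℝ) :
    (fun t : ℝ => t • w) '' A + (fun t : ℝ => t • w) '' B
      = (fun t : ℝ => t • w) '' (A + B) := by
  ext x
  simp only [Set.mem_add, Set.mem_image]
  constructor
  · rintro ⟨-, ⟨a, ha, rfl⟩, -, ⟨b, hb, rfl⟩, rfl⟩
    exact ⟨a + b, ⟨a, ha, b, hb, rfl⟩, add_smul a b w⟩
  · rintro ⟨-, ⟨a, ha, b, hb, rfl⟩, rfl⟩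
    exact ⟨a • w, ⟨a, ha, rfl⟩, b • w, ⟨b, hb, rfl⟩, (add_smul a b w).symm⟩

/-- A sum of collinear segments is the image of an interval. -/
lemma sum_seg_image (s : Finset ι) (w : E2) (l : ι → ℝ) :
    ∑ j ∈ s, segment ℝ 0 (l j • w)
      = (fun t : ℝ => t • w) '' Icc (∑ j ∈ s, min (l j) 0) (∑ j ∈ s, max (l j) 0) := by
  induction s using Finset.induction with
  | empty => simp [show (0 : Set E2) = {0} from rfl]
  | @insert a s ha ih =>
    rw [Finset.sum_insert ha, Finset.sum_insert ha, Finset.sum_insert ha, ih, seg_smul,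
      image_smul_add, Icc_add_Icc min_le_max (Finset.sum_le_sum fun _ _ => min_le_max)]

end SumSeg

section Zono
open scoped Classical
variable {m : ℕ} (v : Fin m → E2)

/-- The zonotope. -/
def Zo : Set E2 := ∑ i, segment ℝ 0 (v i)

def posF (u : E2) : Finset (Fin m) := Finset.univ.filter (fun j => 0 < cross u (v j))
def parF (u : E2) : Finset (Fin m) := Finset.univ.filter (fun j => v j ≠ 0 ∧ cross u (v j) = 0)
def cF (u : E2) : E2 := ∑ j ∈ posF v u, v j

/-- The face of the zonotope in outer normal direction `u`. -/
def face (u : E2) : Set E2 :=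
  (fun y => cF v u + y) '' (∑ j ∈ parF v u, segment ℝ 0 (v j))

lemma parF_neg (u : E2) : parF v (-u) = parF v u := by
  simp [parF, cross_neg_left, neg_eq_zero]

lemma mem_Zo_iff {x : E2} :
    x ∈ Zo v ↔ ∃ t : Fin m → ℝ, (∀ i, t i ∈ Icc (0:ℝ) 1) ∧ x = ∑ i, t i • v i :=
  mem_sum_segment _ _ _

lemma convex_Zo : Convex ℝ (Zo v) := convex_sum_segment _ _
lemma isCompact_Zo : IsCompact (Zo v) := isCompact_sum_segment _ _

lemma split_sum {u : E2} (t : Fin m → ℝ)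
    (h1 : ∀ j, 0 < cross u (v j) → t j = 1) (h0 : ∀ j, cross u (v j) < 0 → t j = 0) :
    ∑ j, t j • v j = cF v u + ∑ j ∈ parF v u, t j • v j := by
  have key : ∀ j : Fin m, t j • v j
      = (if j ∈ posF v u then v j else 0) + (if j ∈ parF v u then t j • v j else 0) := by
    intro j
    rcases lt_trichotomy (cross u (v j)) 0 with hc | hc | hc
    · rw [h0 j hc]
      simp [posF, parF, hc.ne, hc.not_gt]
    · by_cases hv : v j = 0
      · simp [posF, parF, hv, hc]
      · simp [posF, parF, hv, hc, lt_irrefl]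
    · rw [h1 j hc]
      simp [posF, parF, hc, hc.ne']
  calc ∑ j, t j • v j
      = ∑ j : Fin m, ((if j ∈ posF v u then v j else 0)
          + (if j ∈ parF v u then t j • v j else 0)) := Finset.sum_congr rfl fun j _ => key j
    _ = (∑ j : Fin m, if j ∈ posF v u then v j else 0)
          + ∑ j : Fin m, if j ∈ parF v u then t j • v j else 0 := Finset.sum_add_distrib
    _ = cF v u + ∑ j ∈ parF v u, t j • v j := by
        rw [Finset.sum_ite_mem, Finset.sum_ite_mem, Finset.univ_inter, Finset.univ_inter]
        rfl

lemma mem_face {u x : E2} :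
    x ∈ face v u ↔ ∃ t : Fin m → ℝ, (∀ j, t j ∈ Icc (0:ℝ) 1)
      ∧ (∀ j, 0 < cross u (v j) → t j = 1) ∧ (∀ j, cross u (v j) < 0 → t j = 0)
      ∧ x = ∑ j, t j • v j := by
  constructor
  · rintro ⟨y, hy, rfl⟩
    rcases (mem_sum_segment _ _ _).1 hy with ⟨t₀, ht₀, rfl⟩
    set t : Fin m → ℝ := fun j =>
      if 0 < cross u (v j) then 1 else if j ∈ parF v u then t₀ j else 0 with hts
    have h1 : ∀ j, 0 < cross u (v j) → t j = 1 := fun j hj => by simp [hts, hj]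
    have h0 : ∀ j, cross u (v j) < 0 → t j = 0 := fun j hj => by
      simp [hts, hj.not_gt, parF, hj.ne]
    refine ⟨t, ?_, h1, h0, ?_⟩
    · intro j
      simp only [hts]
      split
      · exact ⟨zero_le_one, le_refl 1⟩
      · split
        · exact ht₀ j
        · exact ⟨le_refl 0, zero_le_one⟩
    · rw [split_sum v t h1 h0]
      have he : ∑ j ∈ parF v u, t j • v j = ∑ j ∈ parF v u, t₀ j • v j := by
        refine Finset.sum_congr rfl fun j hj => ?_
        have hnp : ¬ 0 < cross u (v j) := by
          simp only [parF, Finset.mem_filter] at hj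
          rw [hj.2.2]
          exact lt_irrefl 0
        simp [hts, hnp, hj]
      rw [he]
  · rintro ⟨t, ht, h1, h0, rfl⟩
    rw [split_sum v t h1 h0]
    refine ⟨∑ j ∈ parF v u, t j • v j, ?_, rfl⟩
    exact (mem_sum_segment _ _ _).2 ⟨t, ht, rfl⟩

lemma face_subset_Zo (u : E2) : face v u ⊆ Zo v := by
  intro x hx
  rcases (mem_face v).1 hx with ⟨t, ht, -, -, rfl⟩
  exact (mem_Zo_iff v).2 ⟨t, ht, rfl⟩

lemma cross_sum (u : E2) {ι : Type*} (s : Finset ι) (g : ι → E2) :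
    cross u (∑ j ∈ s, g j) = ∑ j ∈ s, cross u (g j) := by
  classical
  induction s using Finset.induction with
  | empty => simp
  | @insert a s ha ih => rw [Finset.sum_insert ha, Finset.sum_insert ha, cross_add_right, ih]

lemma cross_le_on_Zo {u z : E2} (hz : z ∈ Zo v) :
    cross u z ≤ ∑ j, max 0 (cross u (v j)) := by
  rcases (mem_Zo_iff v).1 hz with ⟨t, ht, rfl⟩
  rw [cross_sum]
  refine Finset.sum_le_sum fun j _ => ?_
  rw [cross_smul_right]
  rcases le_total (cross u (v j)) 0 with h | h
  · refine le_trans ?_ (le_max_left _ _)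
    exact mul_nonpos_of_nonneg_of_nonpos (ht j).1 h
  · refine le_trans ?_ (le_max_right _ _)
    nlinarith [(ht j).1, (ht j).2]

lemma cross_face_eq {u x : E2} (hx : x ∈ face v u) :
    cross u x = ∑ j, max 0 (cross u (v j)) := by
  rcases (mem_face v).1 hx with ⟨t, ht, h1, h0, rfl⟩
  rw [cross_sum]
  refine Finset.sum_congr rfl fun j _ => ?_
  rw [cross_smul_right]
  rcases lt_trichotomy (cross u (v j)) 0 with hc | hc | hc
  · rw [h0 j hc, max_eq_left hc.le, zero_mul]
  · rw [hc, mul_zero, max_self]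
  · rw [h1 j hc, max_eq_right hc.le, one_mul]

lemma face_subset_frontier {u : E2} (hu : u ≠ 0) : face v u ⊆ frontier (Zo v) := by
  intro x hx
  have hxZ : x ∈ Zo v := face_subset_Zo v u hx
  have hnotint : x ∉ interior (Zo v) := by
    intro hint
    rcases Metric.isOpen_iff.1 isOpen_interior x hint with ⟨ε, hε, hball⟩
    set δ : ℝ := ε / (2 * (‖perp u‖ + 1)) with hδdef
    have hpn : (0:ℝ) < ‖perp u‖ + 1 := by positivity
    have hδ : 0 < δ := by positivity
    have hy : x + δ • perp u ∈ Zo v := by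
      refine interior_subset (hball ?_)
      rw [Metric.mem_ball, dist_eq_norm, add_sub_cancel_left, norm_smul, Real.norm_eq_abs,
        abs_of_pos hδ]
      calc δ * ‖perp u‖ < δ * (2 * (‖perp u‖ + 1)) := by nlinarith
        _ = ε := by rw [hδdef]; exact div_mul_cancel₀ _ (by positivity)
    have hle := cross_le_on_Zo v (u := u) hy
    rw [cross_add_right, cross_smul_right, cross_perp_self, ← cross_face_eq v hx] at hle
    nlinarith [nsq_pos hu]
  exact ⟨subset_closure hxZ, hnotint⟩

end Zono

/-- explicit coefficient when `b` is parallel to `a` -/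
lemma lam_spec {a b : E2} (ha : a ≠ 0) (h : cross a b = 0) :
    b = (cross b (perp a) / nsq a) • a := by
  have h1 := expand a (perp a) b
  rw [cross_perp_self, h] at h1
  have h2 : nsq a ≠ 0 := (nsq_pos ha).ne'
  have h3 : nsq a • b = cross b (perp a) • a := by rw [h1]; simp
  have h4 : (nsq a)⁻¹ • (nsq a • b) = (nsq a)⁻¹ • (cross b (perp a) • a) := by rw [h3]
  rw [smul_smul, inv_mul_cancel₀ h2, one_smul, smul_smul] at h4
  conv_lhs => rw [h4]
  rw [div_eq_inv_mul]

lemma par_trans {a b c : E2} (hb : b ≠ 0) (hab : cross a b = 0) (hbc : cross b c = 0) :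
    cross a c = 0 := by
  have h1 : cross b a = 0 := by
    have : cross a b = -cross b a := by simp [cross]; ring
    rw [this] at hab
    linarith
  obtain ⟨l, rfl⟩ := exists_lam hb h1
  obtain ⟨k, rfl⟩ := exists_lam hb hbc
  rw [cross_smul_left, cross_smul_right, cross_self]
  ring

def crossLM (u : E2) : E2 →ₗ[ℝ] ℝ where
  toFun := fun x => cross u x
  map_add' := fun x y => cross_add_right u x y
  map_smul' := fun t x => by simp [cross_smul_right]

lemma span_ne {m : ℕ} (v : Fin m → E2) {u : E2} (hu : u ≠ 0)
    (hall : ∀ j, cross u (v j) = 0) : Submodule.span ℝ (Set.range v) ≠ ⊤ := by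
  intro htop
  have hsub : Submodule.span ℝ (Set.range v) ≤ LinearMap.ker (crossLM u) := by
    rw [Submodule.span_le]
    rintro - ⟨j, rfl⟩
    exact hall j
  have : perp u ∈ LinearMap.ker (crossLM u) := hsub (htop ▸ Submodule.mem_top)
  have : cross u (perp u) = 0 := this
  rw [cross_perp_self] at this
  exact (nsq_pos hu).ne' this

section Zono2
open scoped Classical
variable {m : ℕ} (v : Fin m → E2)

def Ifin : Finset (Fin m) := Finset.univ.filter (fun j => v j ≠ 0)
def clsF (j : Fin m) : Finset (Fin m) :=
  Finset.univ.filter (fun i => v i ≠ 0 ∧ cross (v i) (v j) = 0)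
def rep (j : Fin m) : Fin m :=
  if h : (clsF v j).Nonempty then (clsF v j).min' h else j
def RF : Finset (Fin m) := (Ifin v).image (rep v)

lemma self_mem_cls {j : Fin m} (hj : v j ≠ 0) : j ∈ clsF v j := by
  simp [clsF, hj]

lemma rep_mem {j : Fin m} (hj : v j ≠ 0) : rep v j ∈ clsF v j := by
  rw [rep, dif_pos ⟨j, self_mem_cls v hj⟩]
  exact Finset.min'_mem _ _

lemma rep_nonzero {j : Fin m} (hj : v j ≠ 0) : v (rep v j) ≠ 0 := by
  have := rep_mem v hj
  simp only [clsF, Finset.mem_filter] at this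
  exact this.2.1

lemma rep_cross {j : Fin m} (hj : v j ≠ 0) : cross (v (rep v j)) (v j) = 0 := by
  have := rep_mem v hj
  simp only [clsF, Finset.mem_filter] at this
  exact this.2.2

lemma cls_eq {j k : Fin m} (hj : v j ≠ 0) (hk : v k ≠ 0) (hjk : cross (v j) (v k) = 0) :
    clsF v j = clsF v k := by
  ext i
  simp only [clsF, Finset.mem_filter, Finset.mem_univ, true_and]
  constructor
  · rintro ⟨hi, hij⟩
    exact ⟨hi, par_trans hj hij hjk⟩
  · rintro ⟨hi, hik⟩
    refine ⟨hi, ?_⟩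
    have hkj : cross (v k) (v j) = 0 := by
      have : cross (v j) (v k) = -cross (v k) (v j) := by simp [cross]; ring
      rw [this] at hjk; linarith
    exact par_trans hk hik hkj

lemma rep_eq {j k : Fin m} (hj : v j ≠ 0) (hk : v k ≠ 0) (hjk : cross (v j) (v k) = 0) :
    rep v j = rep v k := by
  rw [rep, rep, dif_pos ⟨j, self_mem_cls v hj⟩, dif_pos ⟨k, self_mem_cls v hk⟩]
  congr 1
  exact cls_eq v hj hk hjk

lemma RF_nonzero {i : Fin m} (hi : i ∈ RF v) : v i ≠ 0 := by
  rcases Finset.mem_image.1 hi with ⟨j, hj, rfl⟩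
  simp only [Ifin, Finset.mem_filter] at hj
  exact rep_nonzero v hj.2

lemma rep_idem {i : Fin m} (hi : i ∈ RF v) : rep v i = i := by
  rcases Finset.mem_image.1 hi with ⟨j, hj, rfl⟩
  simp only [Ifin, Finset.mem_filter] at hj
  have hj2 := hj.2
  have h1 : cross (v (rep v j)) (v j) = 0 := rep_cross v hj2
  exact (rep_eq v (rep_nonzero v hj2) hj2 h1).trans rfl

lemma fiber_eq {i : Fin m} (hi : i ∈ RF v) :
    (Ifin v).filter (fun j => rep v j = i) = parF v (v i) := by
  ext j
  simp only [Ifin, parF, Finset.mem_filter, Finset.mem_univ, true_and]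
  constructor
  · rintro ⟨hj, rfl⟩
    exact ⟨hj, rep_cross v hj⟩
  · rintro ⟨hj, hij⟩
    refine ⟨hj, ?_⟩
    rw [rep_eq v hj (RF_nonzero v hi) ?_, rep_idem v hi]
    have : cross (v i) (v j) = -cross (v j) (v i) := by simp [cross]; ring
    rw [this] at hij; linarith

lemma sum_norm_eq : ∑ j, ‖v j‖ = ∑ i ∈ RF v, ∑ j ∈ parF v (v i), ‖v j‖ := by
  have h1 : ∑ j, ‖v j‖ = ∑ j ∈ Ifin v, ‖v j‖ := by
    refine (Finset.sum_subset (Finset.subset_univ _) ?_).symm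
    intro j _ hj
    simp only [Ifin, Finset.mem_filter, Finset.mem_univ, true_and, not_not] at hj
    simp [hj]
  rw [h1, ← Finset.sum_fiberwise_of_maps_to (g := rep v) (t := RF v) ?_ (fun j => ‖v j‖)]
  · refine Finset.sum_congr rfl fun i hi => ?_
    rw [fiber_eq v hi]
  · intro j hj
    simp only [Ifin, Finset.mem_filter] at hj
    exact Finset.mem_image_of_mem _ (by simp [Ifin, hj.2])


lemma S_collinear {i : Fin m} (hi : v i ≠ 0) {u : E2} (hpar : parF v u = parF v (v i)) :
    ∀ a ∈ ∑ j ∈ parF v u, segment ℝ 0 (v j), ∃ s : ℝ, a = s • v i := by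
  intro a ha
  rcases (mem_sum_segment _ _ _).1 ha with ⟨t, _, rfl⟩
  set l : Fin m → ℝ := fun j => cross (v j) (perp (v i)) / nsq (v i) with hl
  have hspec : ∀ j ∈ parF v (v i), v j = l j • v i := by
    intro j hj
    simp only [parF, Finset.mem_filter] at hj
    exact lam_spec hi hj.2.2
  refine ⟨∑ j ∈ parF v u, t j * l j, ?_⟩
  rw [Finset.sum_smul]
  refine Finset.sum_congr rfl fun j hj => ?_
  rw [hspec j (hpar ▸ hj), smul_smul]

lemma face_diff {i : Fin m} (hi : v i ≠ 0) {u x y : E2} (hpar : parF v u = parF v (v i))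
    (hx : x ∈ face v u) (hy : y ∈ face v u) : ∃ t : ℝ, x - y = t • v i := by
  rcases hx with ⟨a, ha, rfl⟩
  rcases hy with ⟨b, hb, rfl⟩
  rcases S_collinear v hi hpar a ha with ⟨s, rfl⟩
  rcases S_collinear v hi hpar b hb with ⟨s', rfl⟩
  exact ⟨s - s', by rw [sub_smul, add_sub_add_left_eq_sub]⟩

lemma face_measure {i : Fin m} (hi : v i ≠ 0) {u : E2} (hpar : parF v u = parF v (v i)) :
    μH[(1:ℝ)] (face v u) = ENNReal.ofReal (∑ j ∈ parF v (v i), ‖v j‖) := by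
  set l : Fin m → ℝ := fun j => cross (v j) (perp (v i)) / nsq (v i) with hl
  have hspec : ∀ j ∈ parF v (v i), v j = l j • v i := by
    intro j hj
    simp only [parF, Finset.mem_filter] at hj
    exact lam_spec hi hj.2.2
  have hS : ∑ j ∈ parF v u, segment ℝ 0 (v j)
      = (fun t : ℝ => t • v i) ''
          Icc (∑ j ∈ parF v (v i), min (l j) 0) (∑ j ∈ parF v (v i), max (l j) 0) := by
    rw [hpar, ← sum_seg_image]
    exact Finset.sum_congr rfl fun j hj => by rw [← hspec j hj]
  rw [face, hS, Set.image_image]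
  have hmap : (fun t : ℝ => cF v u + t • v i)
      = fun t : ℝ => AffineMap.lineMap (cF v u) (cF v u + v i) t := by
    funext t
    rw [AffineMap.lineMap_apply]
    simp only [vsub_eq_sub, vadd_eq_add, add_sub_cancel_left]
    exact add_comm _ _
  rw [hmap]
  rw [hausdorffMeasure_lineMap_image, hausdorffMeasure_real, Real.volume_Icc]
  have hBA : (∑ j ∈ parF v (v i), max (l j) 0) - ∑ j ∈ parF v (v i), min (l j) 0
      = ∑ j ∈ parF v (v i), |l j| := by
    rw [← Finset.sum_sub_distrib]
    refine Finset.sum_congr rfl fun j _ => ?_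
    rw [max_sub_min_eq_abs, zero_sub, abs_neg]
  rw [hBA]
  have hnd : ((nndist (cF v u) (cF v u + v i) : ℝ≥0) : ℝ≥0∞) = ENNReal.ofReal ‖v i‖ := by
    have h1 : cF v u - (cF v u + v i) = -(v i) := by abel
    rw [nndist_eq_nnnorm, h1, nnnorm_neg]
    exact (ofReal_norm (v i)).symm
  rw [ENNReal.smul_def, smul_eq_mul, hnd, ← ENNReal.ofReal_mul (norm_nonneg _)]
  congr 1
  rw [Finset.mul_sum]
  refine Finset.sum_congr rfl fun j hj => ?_
  rw [hspec j hj, norm_smul, Real.norm_eq_abs, mul_comm]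

lemma h1_singleton (x : E2) : μH[(1:ℝ)] ({x} : Set E2) = 0 := by
  have h : ({x} : Set E2) = segment ℝ x x := (segment_same ℝ x).symm
  rw [h, hausdorffMeasure_segment, edist_self]

lemma subsingleton_null {s : Set E2} (h : Set.Subsingleton s) : μH[(1:ℝ)] s = 0 := by
  rcases h.eq_empty_or_singleton with rfl | ⟨x, rfl⟩
  · exact measure_empty
  · exact h1_singleton x

lemma face_pm_disjoint (hspan : Submodule.span ℝ (Set.range v) = ⊤) {i : Fin m}
    (hi : v i ≠ 0) : Disjoint (face v (v i)) (face v (-(v i))) := by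
  rw [Set.disjoint_left]
  intro x hxp hxm
  have h1 := cross_face_eq v hxp
  have h2 := cross_face_eq v hxm
  rw [cross_neg_left] at h2
  have hsum : ∑ j, (max 0 (cross (v i) (v j)) + max 0 (-cross (v i) (v j))) = 0 := by
    rw [Finset.sum_add_distrib, ← h1]
    have : ∀ j : Fin m, max 0 (cross (-(v i)) (v j)) = max 0 (-cross (v i) (v j)) := by
      intro j; rw [cross_neg_left]
    rw [← Finset.sum_congr rfl fun j _ => this j, ← h2]
    ring
  have habs : ∀ j : Fin m, cross (v i) (v j) = 0 := by
    intro j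
    have hterm := (Finset.sum_eq_zero_iff_of_nonneg ?_).1 hsum j (Finset.mem_univ j)
    · rcases le_total (cross (v i) (v j)) 0 with h | h
      · have : max 0 (-cross (v i) (v j)) = -cross (v i) (v j) := max_eq_right (by linarith)
        rw [this, max_eq_left h] at hterm
        linarith
      · rw [max_eq_right h, max_eq_left (by linarith)] at hterm
        linarith
    · intro k _
      have := le_max_left (0:ℝ) (cross (v i) (v k))
      have := le_max_left (0:ℝ) (-cross (v i) (v k))
      positivity
  exact absurd hspan (span_ne v hi habs)

lemma face_inter_subsingleton {i i' : Fin m} (hi : v i ≠ 0) (hi' : v i' ≠ 0)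
    (hcr : cross (v i) (v i') ≠ 0) {u u' : E2} (hp : parF v u = parF v (v i))
    (hp' : parF v u' = parF v (v i')) :
    Set.Subsingleton (face v u ∩ face v u') := by
  intro x hx y hy
  rcases face_diff v hi hp hx.1 hy.1 with ⟨t, ht⟩
  rcases face_diff v hi' hp' hx.2 hy.2 with ⟨t', ht'⟩
  have h1 : cross (v i) (x - y) = 0 := by rw [ht, cross_smul_right, cross_self, mul_zero]
  have h2 : cross (v i) (x - y) = t' * cross (v i) (v i') := by rw [ht', cross_smul_right]
  have ht'0 : t' = 0 := by
    have hz : t' * cross (v i) (v i') = 0 := by rw [← h2, h1]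
    rcases mul_eq_zero.1 hz with h | h
    · exact h
    · exact absurd h hcr
  have : x - y = 0 := by rw [ht', ht'0, zero_smul]
  exact sub_eq_zero.1 this


lemma exists_indep (hspan : Submodule.span ℝ (Set.range v) = ⊤) :
    ∃ i j : Fin m, cross (v i) (v j) ≠ 0 := by
  by_contra h
  push_neg at h
  by_cases hex : ∃ i, v i ≠ 0
  · rcases hex with ⟨i, hi⟩
    exact span_ne v hi (h i) hspan
  · push_neg at hex
    have he : (!₂[(1:ℝ), 0] : E2) ≠ 0 := by
      refine ne_zero_iff.2 (Or.inl ?_)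
      norm_num
    refine absurd hspan (span_ne v he fun j => ?_)
    rw [hex j, cross_zero_right]

lemma interior_nonempty (hspan : Submodule.span ℝ (Set.range v) = ⊤) :
    (interior (Zo v)).Nonempty := by
  obtain ⟨i, j, hD⟩ := exists_indep v hspan
  have hij : i ≠ j := by
    intro h
    rw [h, cross_self] at hD
    exact hD rfl
  set D := cross (v i) (v j) with hDdef
  set α : E2 → ℝ := fun x => cross x (v j) / D with hα
  set β : E2 → ℝ := fun x => cross (v i) x / D with hβ
  have hid : ∀ x : E2, α x • v i + β x • v j = x := by
    intro x
    have h1 := expand (v i) (v j) x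
    have h2 : α x • v i + β x • v j
        = D⁻¹ • (cross x (v j) • v i + cross (v i) x • v j) := by
      rw [smul_add, smul_smul, smul_smul]
      simp [hα, hβ, div_eq_inv_mul]
    rw [h2, ← h1, smul_smul, inv_mul_cancel₀ hD, one_smul]
  have hcα : Continuous α := by
    have : α = fun x => -(crossLM (v j) x) / D := by
      funext x
      have : cross x (v j) = -(cross (v j) x) := by simp [cross]; ring
      simp [hα, crossLM, this]
    rw [this]
    exact ((crossLM (v j)).continuous_of_finiteDimensional.neg).div_const _
  have hcβ : Continuous β := by
    have : β = fun x => (crossLM (v i) x) / D := by funext x; simp [hβ, crossLM]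
    rw [this]
    exact ((crossLM (v i)).continuous_of_finiteDimensional).div_const _
  set A := α ⁻¹' (Ioo 0 1) ∩ β ⁻¹' (Ioo 0 1) with hA
  have hopen : IsOpen A := (isOpen_Ioo.preimage hcα).inter (isOpen_Ioo.preimage hcβ)
  have hsub : A ⊆ Zo v := by
    rintro x ⟨hx1, hx2⟩
    refine (mem_Zo_iff v).2 ⟨fun k => if k = i then α x else if k = j then β x else 0, ?_, ?_⟩
    · intro k
      dsimp only
      split
      · exact ⟨(hx1.1).le, (hx1.2).le⟩
      · split
        · exact ⟨(hx2.1).le, (hx2.2).le⟩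
        · exact ⟨le_refl 0, zero_le_one⟩
    · have key : ∀ k : Fin m, (if k = i then α x else if k = j then β x else 0) • v k
          = (if k = i then α x • v i else 0) + (if k = j then β x • v j else 0) := by
        intro k
        by_cases h1 : k = i
        · subst h1
          rw [if_pos rfl, if_pos rfl, if_neg hij, add_zero]
        · by_cases h2 : k = j
          · subst h2
            rw [if_neg h1, if_pos rfl, if_pos rfl, if_neg h1, zero_add]
          · rw [if_neg h1, if_neg h2, if_neg h1, if_neg h2, zero_smul, add_zero]
      rw [Finset.sum_congr rfl fun k _ => key k, Finset.sum_add_distrib,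
        Finset.sum_ite_eq' Finset.univ i, Finset.sum_ite_eq' Finset.univ j]
      simp only [Finset.mem_univ, if_true]
      exact (hid x).symm
  have hx₀ : ((1/2 : ℝ) • v i + (1/2 : ℝ) • v j) ∈ A := by
    constructor
    · have : α ((1/2 : ℝ) • v i + (1/2 : ℝ) • v j) = 1/2 := by
        simp only [hα, cross_add_left, cross_smul_left, cross_self]
        rw [mul_zero, add_zero, ← hDdef, mul_div_assoc, div_self hD, mul_one]
      rw [mem_preimage, this]
      norm_num
    · have : β ((1/2 : ℝ) • v i + (1/2 : ℝ) • v j) = 1/2 := by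
        simp only [hβ, cross_add_right, cross_smul_right, cross_self]
        rw [mul_zero, zero_add, ← hDdef, mul_div_assoc, div_self hD, mul_one]
      rw [mem_preimage, this]
      norm_num
  exact ⟨_, interior_maximal hsub hopen hx₀⟩

lemma support_le {x : E2} (hne : (interior (Zo v)).Nonempty) (hx : x ∉ interior (Zo v)) :
    ∃ f : E2 →L[ℝ] ℝ, (∃ w ∈ interior (Zo v), f w < f x) ∧ ∀ y ∈ Zo v, f y ≤ f x := by
  obtain ⟨f, hf⟩ := geometric_hahn_banach_open_point ((convex_Zo v).interior) isOpen_interior hx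
  obtain ⟨w₀, hw₀⟩ := hne
  refine ⟨f, ⟨w₀, hw₀, hf w₀ hw₀⟩, ?_⟩
  intro y hy
  by_contra hlt
  push_neg at hlt
  set c := f y - f x with hc
  set d := f y - f w₀ with hd
  have hc0 : 0 < c := sub_pos.2 hlt
  have hd0 : 0 < d := sub_pos.2 (lt_trans (hf w₀ hw₀) hlt)
  set t := min 1 (c / (2 * d)) with htdef
  have ht0 : 0 < t := lt_min one_pos (by positivity)
  have ht1 : t ≤ 1 := min_le_left _ _
  have hmem : y + t • (w₀ - y) ∈ interior (Zo v) :=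
    (convex_Zo v).add_smul_sub_mem_interior hy hw₀ ⟨ht0, ht1⟩
  have hlt2 := hf _ hmem
  rw [map_add, _root_.map_smul, map_sub, smul_eq_mul] at hlt2
  have htle : t ≤ c / (2 * d) := min_le_right _ _
  have h5 : t * d ≤ c / (2 * d) * d := mul_le_mul_of_nonneg_right htle hd0.le
  have h6 : c / (2 * d) * d = c / 2 := by
    field_simp
  have h7 : t * (f w₀ - f y) = -(t * d) := by rw [hd]; ring
  rw [h7] at hlt2
  linarith

lemma functional_vanish {f : E2 →L[ℝ] ℝ} {a : E2} (hfa : f a = 0) (x : E2) :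
    nsq a * f x = cross a x * f (perp a) := by
  have h1 := expand a (perp a) x
  rw [cross_perp_self] at h1
  have h2 := congrArg f h1
  rw [_root_.map_smul, map_add, _root_.map_smul, _root_.map_smul, smul_eq_mul, smul_eq_mul, smul_eq_mul, hfa,
    mul_zero, zero_add] at h2
  exact h2

lemma support_t {f : E2 →L[ℝ] ℝ} {x : E2} (hx : x ∈ Zo v) (hsup : ∀ y ∈ Zo v, f y ≤ f x) :
    ∃ t : Fin m → ℝ, (∀ j, t j ∈ Icc (0:ℝ) 1) ∧ x = ∑ j, t j • v j
      ∧ (∀ j, 0 < f (v j) → t j = 1) ∧ (∀ j, f (v j) < 0 → t j = 0) := by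
  obtain ⟨t, ht, rfl⟩ := (mem_Zo_iff v).1 hx
  set y₀ : E2 := ∑ j, (if 0 < f (v j) then (1:ℝ) else 0) • v j with hy₀
  have hy₀Z : y₀ ∈ Zo v := by
    refine (mem_Zo_iff v).2 ⟨_, fun j => ?_, rfl⟩
    split
    · exact ⟨zero_le_one, le_refl 1⟩
    · exact ⟨le_refl 0, zero_le_one⟩
  have hfy₀ : f y₀ = ∑ j, max 0 (f (v j)) := by
    rw [hy₀, map_sum]
    refine Finset.sum_congr rfl fun j _ => ?_
    rw [_root_.map_smul, smul_eq_mul]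
    by_cases h : 0 < f (v j)
    · rw [if_pos h, one_mul, max_eq_right h.le]
    · rw [if_neg h, zero_mul, max_eq_left (not_lt.1 h)]
  have hfx : f (∑ j, t j • v j) = ∑ j, t j * f (v j) := by
    rw [map_sum]
    exact Finset.sum_congr rfl fun j _ => by rw [_root_.map_smul, smul_eq_mul]
  have hle : ∀ j ∈ Finset.univ, t j * f (v j) ≤ max 0 (f (v j)) := by
    intro j _
    rcases le_or_gt (f (v j)) 0 with h | h
    · exact le_trans (mul_nonpos_of_nonneg_of_nonpos (ht j).1 h) (le_max_left _ _)
    · refine le_trans ?_ (le_max_right _ _)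
      nlinarith [(ht j).1, (ht j).2]
  have hsums : ∑ j, t j * f (v j) = ∑ j, max 0 (f (v j)) :=
    le_antisymm (Finset.sum_le_sum hle) (by rw [← hfy₀, ← hfx]; exact hsup y₀ hy₀Z)
  have hterm := (Finset.sum_eq_sum_iff_of_le hle).1 hsums
  refine ⟨t, ht, rfl, ?_, ?_⟩
  · intro j hj
    have h := hterm j (Finset.mem_univ j)
    rw [max_eq_right hj.le] at h
    have h2 : t j * f (v j) = 1 * f (v j) := by rw [h, one_mul]
    exact mul_right_cancel₀ hj.ne' h2
  · intro j hj
    have h := hterm j (Finset.mem_univ j)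
    rw [max_eq_left hj.le] at h
    rcases mul_eq_zero.1 h with h | h
    · exact h
    · exact absurd h hj.ne

lemma frontier_subset_faces (hspan : Submodule.span ℝ (Set.range v) = ⊤) :
    frontier (Zo v) ⊆ (⋃ s : Finset (Fin m), ({∑ j ∈ s, v j} : Set E2))
      ∪ ⋃ i ∈ RF v, (face v (v i) ∪ face v (-(v i))) := by
  intro x hx
  have hxZ : x ∈ Zo v := by
    have h1 := frontier_subset_closure hx
    rwa [IsClosed.closure_eq (isCompact_Zo v).isClosed] at h1
  have hxI : x ∉ interior (Zo v) := fun h => hx.2 h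
  obtain ⟨f, ⟨w₀, hw₀, hfw₀⟩, hsup⟩ := support_le v (interior_nonempty v hspan) hxI
  obtain ⟨t, ht, hxe, h1, h0⟩ := support_t v hxZ hsup
  by_cases hex : ∃ j, v j ≠ 0 ∧ f (v j) = 0
  · obtain ⟨j₀, hj₀, hfj₀⟩ := hex
    set i := rep v j₀ with hirep
    have hiR : i ∈ RF v := Finset.mem_image_of_mem _ (by simp [Ifin, hj₀])
    have hi : v i ≠ 0 := rep_nonzero v hj₀
    have hic : cross (v i) (v j₀) = 0 := rep_cross v hj₀
    have hfi : f (v i) = 0 := by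
      obtain ⟨l, hl⟩ := exists_lam hi hic
      have hlne : l ≠ 0 := by
        intro h
        rw [h, zero_smul] at hl
        exact hj₀ hl
      have heq : f (v j₀) = l * f (v i) := by rw [hl, _root_.map_smul, smul_eq_mul]
      rw [hfj₀] at heq
      exact (mul_eq_zero.1 heq.symm).resolve_left hlne
    have hrel : ∀ j, nsq (v i) * f (v j) = cross (v i) (v j) * f (perp (v i)) :=
      fun j => functional_vanish hfi (v j)
    have hnsq := nsq_pos hi
    have hφ : f (perp (v i)) ≠ 0 := by
      intro h0'
      have hz : ∀ z : E2, f z = 0 := by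
        intro z
        have hzz := functional_vanish hfi z
        rw [h0', mul_zero] at hzz
        exact (mul_eq_zero.1 hzz).resolve_left hnsq.ne'
      rw [hz w₀, hz x] at hfw₀
      exact lt_irrefl 0 hfw₀
    have sign_pos : ∀ j, 0 < cross (v i) (v j) * f (perp (v i)) → 0 < f (v j) := by
      intro j h
      nlinarith [hrel j, hnsq]
    have sign_neg : ∀ j, cross (v i) (v j) * f (perp (v i)) < 0 → f (v j) < 0 := by
      intro j h
      nlinarith [hrel j, hnsq]
    refine Or.inr (mem_iUnion₂.2 ⟨i, hiR, ?_⟩)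
    rcases hφ.lt_or_gt with hφn | hφp
    · refine Or.inr ((mem_face v).2 ⟨t, ht, ?_, ?_, hxe⟩)
      · intro j hj
        rw [cross_neg_left] at hj
        refine h1 j (sign_pos j ?_)
        nlinarith
      · intro j hj
        rw [cross_neg_left] at hj
        refine h0 j (sign_neg j ?_)
        nlinarith
    · refine Or.inl ((mem_face v).2 ⟨t, ht, ?_, ?_, hxe⟩)
      · intro j hj
        exact h1 j (sign_pos j (mul_pos hj hφp))
      · intro j hj
        refine h0 j (sign_neg j ?_)
        nlinarith
  · push_neg at hex
    refine Or.inl (mem_iUnion.2 ⟨Finset.univ.filter (fun j => 0 < f (v j)), ?_⟩)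
    rw [mem_singleton_iff, hxe]
    have key : ∀ j : Fin m, t j • v j
        = if j ∈ Finset.univ.filter (fun j => 0 < f (v j)) then v j else 0 := by
      intro j
      by_cases hv : v j = 0
      · rw [hv, smul_zero]
        split <;> rfl
      · rcases (hex j hv).lt_or_gt with h | h
        · rw [h0 j h, zero_smul, if_neg]
          simp only [Finset.mem_filter, Finset.mem_univ, true_and, not_lt]
          exact h.le
        · rw [h1 j h, one_smul, if_pos]
          simp only [Finset.mem_filter, Finset.mem_univ, true_and]
          exact h
    rw [Finset.sum_congr rfl fun j _ => key j, Finset.sum_ite_mem, Finset.univ_inter]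


theorem main (hspan : Submodule.span ℝ (Set.range v) = ⊤) :
    μH[(1 : ℝ)] (frontier (Zo v)) = ENNReal.ofReal (2 * ∑ i, ‖v i‖) := by
  set V : Set E2 := ⋃ s : Finset (Fin m), ({∑ j ∈ s, v j} : Set E2) with hV
  set U : Set E2 := ⋃ i ∈ RF v, (face v (v i) ∪ face v (-(v i))) with hU
  have hUfront : U ⊆ frontier (Zo v) := by
    refine Set.iUnion₂_subset fun i hi => Set.union_subset ?_ ?_
    · exact face_subset_frontier v (RF_nonzero v hi)
    · exact face_subset_frontier v (neg_ne_zero.2 (RF_nonzero v hi))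
  have hVnull : μH[(1:ℝ)] V = 0 := measure_iUnion_null fun s => h1_singleton _
  have hmeq : μH[(1:ℝ)] (frontier (Zo v)) = μH[(1:ℝ)] U := by
    refine le_antisymm ?_ (measure_mono hUfront)
    calc μH[(1:ℝ)] (frontier (Zo v)) ≤ μH[(1:ℝ)] (V ∪ U) :=
          measure_mono (frontier_subset_faces v hspan)
      _ ≤ μH[(1:ℝ)] V + μH[(1:ℝ)] U := measure_union_le _ _
      _ = μH[(1:ℝ)] U := by rw [hVnull, zero_add]
  set G : Fin m × Bool → Set E2 := fun p => face v (if p.2 then v p.1 else -(v p.1)) with hG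
  have hpar : ∀ (i : Fin m) (b : Bool), parF v (if b then v i else -(v i)) = parF v (v i) := by
    intro i b
    cases b
    · exact parF_neg v (v i)
    · rfl
  have hUG : U = ⋃ p ∈ RF v ×ˢ (Finset.univ : Finset Bool), G p := by
    ext x
    simp only [hU, hG, Set.mem_iUnion, Finset.mem_product, Finset.mem_univ, and_true,
      Set.mem_union, exists_prop]
    constructor
    · rintro ⟨i, hi, hx | hx⟩
      · exact ⟨(i, true), hi, hx⟩
      · exact ⟨(i, false), hi, hx⟩
    · rintro ⟨⟨i, b⟩, hi, hx⟩
      cases b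
      · exact ⟨i, hi, Or.inr hx⟩
      · exact ⟨i, hi, Or.inl hx⟩
  have hmeas : ∀ p ∈ RF v ×ˢ (Finset.univ : Finset Bool),
      NullMeasurableSet (G p) μH[(1:ℝ)] := by
    intro p _
    have hc : IsCompact (G p) :=
      (isCompact_sum_segment _ _).image (continuous_const.add continuous_id)
    exact hc.isClosed.measurableSet.nullMeasurableSet
  have hdisj : Set.Pairwise ↑(RF v ×ˢ (Finset.univ : Finset Bool))
      (Function.onFun (AEDisjoint μH[(1:ℝ)]) G) := by
    rintro ⟨i, b⟩ hp ⟨i', b'⟩ hq hne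
    have hi : i ∈ RF v := (Finset.mem_product.1 (Finset.mem_coe.1 hp)).1
    have hi' : i' ∈ RF v := (Finset.mem_product.1 (Finset.mem_coe.1 hq)).1
    by_cases hii : i = i'
    · subst hii
      have hbb : b ≠ b' := fun h => hne (by rw [h])
      have hvd := face_pm_disjoint v hspan (RF_nonzero v hi)
      have : Disjoint (G (i, b)) (G (i, b')) := by
        simp only [hG]
        cases b <;> cases b'
        · exact absurd rfl hbb
        · exact hvd.symm
        · exact hvd
        · exact absurd rfl hbb
      exact this.aedisjoint
    · have hcr : cross (v i) (v i') ≠ 0 := by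
        intro hc
        have h := rep_eq v (RF_nonzero v hi) (RF_nonzero v hi') hc
        rw [rep_idem v hi, rep_idem v hi'] at h
        exact hii h
      exact subsingleton_null (face_inter_subsingleton v (RF_nonzero v hi) (RF_nonzero v hi')
        hcr (hpar i b) (hpar i' b'))
  rw [hmeq, hUG, measure_biUnion_finset₀ hdisj hmeas, Finset.sum_product]
  have hrow : ∀ i ∈ RF v, (∑ b : Bool, μH[(1:ℝ)] (G (i, b)))
      = ENNReal.ofReal (2 * ∑ j ∈ parF v (v i), ‖v j‖) := by
    intro i hi
    rw [Fintype.sum_bool]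
    have hGt : μH[(1:ℝ)] (G (i, true)) = ENNReal.ofReal (∑ j ∈ parF v (v i), ‖v j‖) :=
      face_measure v (RF_nonzero v hi) (hpar i true)
    have hGf : μH[(1:ℝ)] (G (i, false)) = ENNReal.ofReal (∑ j ∈ parF v (v i), ‖v j‖) :=
      face_measure v (RF_nonzero v hi) (hpar i false)
    rw [hGt, hGf, ← ENNReal.ofReal_add (by positivity) (by positivity)]
    congr 1
    ring
  rw [Finset.sum_congr rfl hrow,
    ← ENNReal.ofReal_sum_of_nonneg (fun i _ => by positivity)]
  congr 1
  have := sum_norm_eq v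
  rw [← Finset.mul_sum, ← sum_norm_eq v]

end Zono2
end Z16

/-- The perimeter of a planar zonotope `Z = ∑ [0,vᵢ]` whose generators span `ℝ²` equals
twice the total length of its generating segments: `H¹(∂Z) = 2·∑ ‖vᵢ‖`. -/
theorem stmt_16 {m : ℕ} (v : Fin m → EuclideanSpace ℝ (Fin 2))
    (hspan : Submodule.span ℝ (Set.range v) = ⊤) :
    μH[(1 : ℝ)] (frontier (∑ i, segment ℝ 0 (v i))) = ENNReal.ofReal (2 * ∑ i, ‖v i‖) :=
  Z16.main v hspan
end
end
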